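/- arXiv:1203.2664 — 13 statements merged into one kernel-verified Lean document; each statement's English description precedes it below -/
import Mathlib

section
/- Let X₁, X₂ be subspaces of E. Then X₁ ⊥g∘ X₂ if and only if there exists a subspace Z such that Z ⊥x X₂ and (X₁ ∩ X₂) ⊔ Z = X₁. -/
/-- `Perp X Y`: every vector in the direction of `X` is orthogonal to every
vector in the direction of `Y`. -/
def Perp {E : Type*} [NormedAddCommGroup E] [InnerProductSpace ℝ E]
    (X Y : AffineSubspace ℝ E) : Prop :=
  ∀ u ∈ X.direction, ∀ v ∈ Y.direction, (inner ℝ u v : ℝ) = 0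

/-- `PerpX X Y`: `X ⊥ Y` and `X ∩ Y ≠ ∅`. -/
def PerpX {E : Type*} [NormedAddCommGroup E] [InnerProductSpace ℝ E]
    (X Y : AffineSubspace ℝ E) : Prop :=
  Perp X Y ∧ ((X : Set E) ∩ (Y : Set E)).Nonempty

/-- `PerpGo X₁ X₂`: the relation `⊥g∘`. -/
def PerpGo {E : Type*} [NormedAddCommGroup E] [InnerProductSpace ℝ E]
    (X₁ X₂ : AffineSubspace ℝ E) : Prop :=
  ∃ q : E, q ∈ X₁ ⊓ X₂ ∧ ∃ Z₁ Z₂ : AffineSubspace ℝ E,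
    q ∈ Z₁ ∧ q ∈ Z₂ ∧ PerpX Z₁ (X₁ ⊓ X₂) ∧ PerpX Z₂ (X₁ ⊓ X₂) ∧ PerpX Z₁ Z₂ ∧
    (X₁ ⊓ X₂) ⊔ Z₁ = X₁ ∧ (X₁ ⊓ X₂) ⊔ Z₂ = X₂

/-- `PerpG X₁ X₂`: the relation `⊥g`. -/
def PerpG {E : Type*} [NormedAddCommGroup E] [InnerProductSpace ℝ E]
    (X₁ X₂ : AffineSubspace ℝ E) : Prop :=
  PerpGo X₁ X₂ ∧ X₁ ⊓ X₂ ≠ X₁ ∧ X₁ ⊓ X₂ ≠ X₂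

/-- Dimension of an affine subspace: the dimension of its direction. -/
noncomputable def adim {E : Type*} [NormedAddCommGroup E] [InnerProductSpace ℝ E]
    (X : AffineSubspace ℝ E) : ℕ :=
  Module.finrank ℝ X.direction

variable {E : Type*} [NormedAddCommGroup E] [InnerProductSpace ℝ E] [FiniteDimensional ℝ E]

lemma sup_orth_inf (W V : Submodule ℝ E) (h : W ≤ V) : W ⊔ (Wᗮ ⊓ V) = V := by
  refine le_antisymm (sup_le h inf_le_right) ?_
  intro v hv
  have hw : (Submodule.orthogonalProjectionOnto W v : E) ∈ W := (Submodule.orthogonalProjectionOnto W v).2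
  have hv' : v = (Submodule.orthogonalProjectionOnto W v : E) + (v - Submodule.orthogonalProjectionOnto W v) := by abel
  rw [hv']
  exact Submodule.add_mem _ (Submodule.mem_sup_left hw)
    (Submodule.mem_sup_right ⟨Submodule.sub_starProjection_mem_orthogonal v,
      Submodule.sub_mem _ hv (h hw)⟩)

lemma direction_sup_of_mem {s1 s2 : AffineSubspace ℝ E} {p : E} (hp1 : p ∈ s1) (hp2 : p ∈ s2) :
    (s1 ⊔ s2).direction = s1.direction ⊔ s2.direction := by
  rw [AffineSubspace.direction_sup hp1 hp2, vsub_self]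
  simp

theorem stmt0 (X₁ X₂ : AffineSubspace ℝ E)
    (hX₁ : (X₁ : Set E).Nonempty) (hX₂ : (X₂ : Set E).Nonempty) :
    PerpGo X₁ X₂ ↔
      ∃ Z : AffineSubspace ℝ E, (Z : Set E).Nonempty ∧ PerpX Z X₂ ∧ (X₁ ⊓ X₂) ⊔ Z = X₁ := by
  constructor
  · rintro ⟨q, hq, Z₁, Z₂, hqZ₁, hqZ₂, ⟨h1p, -⟩, -, ⟨h12, -⟩, hs1, hs2⟩
    obtain ⟨hq1, hq2⟩ := (AffineSubspace.mem_inf_iff q X₁ X₂).1 hq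
    refine ⟨Z₁, ⟨q, hqZ₁⟩, ⟨?_, ⟨q, hqZ₁, hq2⟩⟩, hs1⟩
    intro u hu v hv
    have hd2 := direction_sup_of_mem hq hqZ₂
    rw [hs2] at hd2
    rw [hd2] at hv
    obtain ⟨a, ha, b, hb, rfl⟩ := Submodule.mem_sup.1 hv
    rw [inner_add_right (𝕜 := ℝ), h1p u hu a ha, h12 u hu b hb, add_zero]
  · rintro ⟨Z, hZne, ⟨hZperp, ⟨q, hqZ, hqX₂⟩⟩, hsup⟩
    have hZle : Z ≤ X₁ := hsup ▸ le_sup_right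
    have hq1 : q ∈ X₁ := hZle hqZ
    have hq : q ∈ X₁ ⊓ X₂ := ⟨hq1, hqX₂⟩
    set W := (X₁ ⊓ X₂).direction with hW
    have hWle : W ≤ X₂.direction := by
      rw [hW, AffineSubspace.direction_inf_of_mem hq1 hqX₂]; exact inf_le_right
    set Z₂ : AffineSubspace ℝ E := AffineSubspace.mk' q (Wᗮ ⊓ X₂.direction) with hZ₂
    have hqZ₂ : q ∈ Z₂ := AffineSubspace.self_mem_mk' _ _
    have hdZ₂ : Z₂.direction = Wᗮ ⊓ X₂.direction := AffineSubspace.direction_mk' _ _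
    have hZW : Perp Z (X₁ ⊓ X₂) := fun u hu v hv => hZperp u hu v (hWle hv)
    refine ⟨q, hq, Z, Z₂, hqZ, hqZ₂, ⟨hZW, ⟨q, hqZ, hq⟩⟩,
      ⟨?_, ⟨q, hqZ₂, hq⟩⟩, ⟨?_, ⟨q, hqZ, hqZ₂⟩⟩, hsup, ?_⟩
    · intro u hu v hv
      rw [hdZ₂] at hu
      rw [real_inner_comm]
      exact hu.1 v hv
    · intro u hu v hv
      rw [hdZ₂] at hv
      exact hZperp u hu v hv.2
    · refine AffineSubspace.ext_of_direction_eq ?_ ⟨q, le_sup_left (a := X₁ ⊓ X₂) (b := Z₂) hq, hqX₂⟩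
      · rw [direction_sup_of_mem hq hqZ₂, hdZ₂, ← hW]
        exact sup_orth_inf W X₂.direction hWle
end

section
/- For subspaces X₁, X₂ of E: X₁ ⊥g∘ X₂ if and only if X₁ ⊥g X₂ or X₁ ⊆ X₂ or X₂ ⊆ X₁. -/
variable {E : Type*} [NormedAddCommGroup E] [InnerProductSpace ℝ E] [FiniteDimensional ℝ E]

lemma perp_symm' {X Y : AffineSubspace ℝ E} (h : Perp X Y) : Perp Y X := by
  intro u hu v hv
  rw [real_inner_comm]
  exact h v hv u hu

lemma perpX_symm' {X Y : AffineSubspace ℝ E} (h : PerpX X Y) : PerpX Y X :=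
  ⟨perp_symm' h.1, h.2.imp fun _ hx => ⟨hx.2, hx.1⟩⟩

lemma perpGo_symm' {X Y : AffineSubspace ℝ E} (h : PerpGo X Y) : PerpGo Y X := by
  obtain ⟨q, hq, Z₁, Z₂, h1, h2, h3, h4, h5, h6, h7⟩ := h
  have hc : Y ⊓ X = X ⊓ Y := inf_comm _ _
  exact ⟨q, hc ▸ hq, Z₂, Z₁, h2, h1, hc ▸ h4, hc ▸ h3, perpX_symm' h5, hc ▸ h7, hc ▸ h6⟩

lemma perpGo_of_le {X₁ X₂ : AffineSubspace ℝ E} (h : X₁ ≤ X₂)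
    (hX₁ : (X₁ : Set E).Nonempty) : PerpGo X₁ X₂ := by
  obtain ⟨q, hq⟩ := hX₁
  have hinf : X₁ ⊓ X₂ = X₁ := inf_eq_left.mpr h
  set W : Submodule ℝ E := X₁.directionᗮ ⊓ X₂.direction with hW
  refine ⟨q, ⟨hq, h hq⟩, AffineSubspace.mk' q ⊥, AffineSubspace.mk' q W,
    AffineSubspace.self_mem_mk' q _, AffineSubspace.self_mem_mk' q _, ?_, ?_, ?_, ?_, ?_⟩
  · refine ⟨?_, ⟨q, AffineSubspace.self_mem_mk' q _, hq, h hq⟩⟩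
    intro u hu v hv
    rw [AffineSubspace.direction_mk'] at hu
    simp [(Submodule.mem_bot ℝ).mp hu]
  · refine ⟨?_, ⟨q, AffineSubspace.self_mem_mk' q _, hq, h hq⟩⟩
    intro u hu v hv
    rw [AffineSubspace.direction_mk'] at hu
    rw [hinf] at hv
    exact real_inner_comm v u ▸ hu.1 v hv
  · refine ⟨?_, ⟨q, AffineSubspace.self_mem_mk' q _, AffineSubspace.self_mem_mk' q _⟩⟩
    intro u hu v hv
    rw [AffineSubspace.direction_mk'] at hu
    simp [(Submodule.mem_bot ℝ).mp hu]
  · rw [hinf]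
    refine sup_eq_left.mpr ?_
    intro x hx
    rw [AffineSubspace.mem_mk'] at hx
    have : x = q := by
      have := (Submodule.mem_bot ℝ).mp hx
      rwa [vsub_eq_zero_iff_eq] at this
    exact this ▸ hq
  · rw [hinf]
    apply le_antisymm
    · refine sup_le h ?_
      intro x hx
      rw [AffineSubspace.mem_mk'] at hx
      have : (x -ᵥ q) +ᵥ q ∈ X₂ :=
        AffineSubspace.vadd_mem_of_mem_direction hx.2 (h hq)
      simpa using this
    · intro x hx
      have hxd : x -ᵥ q ∈ X₂.direction := AffineSubspace.vsub_mem_direction hx (h hq)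
      have hdec : X₁.direction ⊔ (X₁.directionᗮ ⊓ X₂.direction) = X₂.direction :=
        Submodule.sup_orthogonal_inf_of_hasOrthogonalProjection (AffineSubspace.direction_le h)
      rw [← hdec, Submodule.mem_sup] at hxd
      obtain ⟨v, hv, w, hw, hvw⟩ := hxd
      have hq' : q ∈ X₁ ⊔ AffineSubspace.mk' q W :=
        le_sup_left (α := AffineSubspace ℝ E) hq
      have hwq : w +ᵥ q ∈ X₁ ⊔ AffineSubspace.mk' q W := by
        refine le_sup_right (α := AffineSubspace ℝ E) ?_
        rw [AffineSubspace.mem_mk']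
        simpa [hW] using hw
      have hvdir : v ∈ (X₁ ⊔ AffineSubspace.mk' q W).direction :=
        AffineSubspace.direction_le le_sup_left hv
      have : v +ᵥ (w +ᵥ q) ∈ X₁ ⊔ AffineSubspace.mk' q W :=
        AffineSubspace.vadd_mem_of_mem_direction hvdir hwq
      have hx' : x = v +ᵥ (w +ᵥ q) := by
        rw [vadd_vadd, hvw, vsub_vadd]
      exact hx' ▸ this

theorem stmt3 (X₁ X₂ : AffineSubspace ℝ E)
    (hX₁ : (X₁ : Set E).Nonempty) (hX₂ : (X₂ : Set E).Nonempty) :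
    PerpGo X₁ X₂ ↔ (PerpG X₁ X₂ ∨ X₁ ≤ X₂ ∨ X₂ ≤ X₁) := by
  constructor
  · intro h
    by_cases h1 : X₁ ⊓ X₂ = X₁
    · exact Or.inr (Or.inl (inf_eq_left.mp h1))
    by_cases h2 : X₁ ⊓ X₂ = X₂
    · exact Or.inr (Or.inr (inf_eq_right.mp h2))
    exact Or.inl ⟨h, h1, h2⟩
  · rintro (h | h | h)
    · exact h.1
    · exact perpGo_of_le h hX₁
    · exact perpGo_symm' (perpGo_of_le h hX₂)
end

section
/- Let k₁, k₂, m be natural numbers with m < k₁ and m < k₂. Then there exist subspaces X₁, X₂ of E with dim X₁ = k₁, dim X₂ = k₂, X₁ ⊥g X₂, and dim(X₁ ∩ X₂) = m, if and only if k₁ + k₂ − m ≤ dim E. -/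
variable {E : Type*} [NormedAddCommGroup E] [InnerProductSpace ℝ E] [FiniteDimensional ℝ E]

private lemma sup_reassoc {α : Type*} [Lattice α] (a b c : α) :
    (a ⊔ b) ⊔ (a ⊔ c) = a ⊔ b ⊔ c := by
  rw [sup_sup_sup_comm, sup_idem, sup_assoc]

private lemma ortho_finrank_sup {U V : Submodule ℝ E} (h : U ⟂ V) :
    Module.finrank ℝ (U ⊔ V : Submodule ℝ E) = Module.finrank ℝ U + Module.finrank ℝ V := by
  rw [← Submodule.finrank_sup_add_finrank_inf_eq U V, h.disjoint.eq_bot, finrank_bot, add_zero]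

private lemma dir_sup_of_mem {s₁ s₂ : AffineSubspace ℝ E} {q : E} (h1 : q ∈ s₁) (h2 : q ∈ s₂) :
    (s₁ ⊔ s₂).direction = s₁.direction ⊔ s₂.direction := by
  rw [AffineSubspace.direction_sup h1 h2]
  simp

private lemma toAff_inf (p q : Submodule ℝ E) :
    p.toAffineSubspace ⊓ q.toAffineSubspace = (p ⊓ q).toAffineSubspace := by
  ext x
  simp [Submodule.mem_toAffineSubspace, AffineSubspace.mem_inf_iff, Submodule.mem_inf]

private lemma toAff_adim (p : Submodule ℝ E) :
    adim p.toAffineSubspace = Module.finrank ℝ p := by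
  rw [adim, Submodule.toAffineSubspace_direction]

theorem stmt4 (k₁ k₂ m : ℕ) (hm₁ : m < k₁) (hm₂ : m < k₂) :
    (∃ X₁ X₂ : AffineSubspace ℝ E, (X₁ : Set E).Nonempty ∧ (X₂ : Set E).Nonempty ∧
        adim X₁ = k₁ ∧ adim X₂ = k₂ ∧ PerpG X₁ X₂ ∧ adim (X₁ ⊓ X₂) = m) ↔
      k₁ + k₂ - m ≤ Module.finrank ℝ E := by
  constructor
  · rintro ⟨X₁, X₂, -, -, hd1, hd2,
      ⟨⟨q, hq, Z₁, Z₂, hq1, hq2, hZ1, hZ2, hZ12, hs1, hs2⟩, -, -⟩, hdm⟩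
    have hqX1 : q ∈ X₁ := ((AffineSubspace.mem_inf_iff q X₁ X₂).1 hq).1
    have hqX2 : q ∈ X₂ := ((AffineSubspace.mem_inf_iff q X₁ X₂).1 hq).2
    set W := (X₁ ⊓ X₂).direction with hW
    set D₁ := Z₁.direction with hD₁
    set D₂ := Z₂.direction with hD₂
    have hW1 : D₁ ⟂ W := Submodule.isOrtho_iff_inner_eq.2 hZ1.1
    have hW2 : D₂ ⟂ W := Submodule.isOrtho_iff_inner_eq.2 hZ2.1
    have h12 : D₁ ⟂ D₂ := Submodule.isOrtho_iff_inner_eq.2 hZ12.1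
    have hdir1 : X₁.direction = W ⊔ D₁ := by
      rw [← hs1]; exact dir_sup_of_mem hq hq1
    have hdir2 : X₂.direction = W ⊔ D₂ := by
      rw [← hs2]; exact dir_sup_of_mem hq hq2
    have e1 : k₁ = m + Module.finrank ℝ D₁ := by
      rw [← hd1, ← hdm, adim, adim, hdir1, ortho_finrank_sup hW1.symm]
    have e2 : k₂ = m + Module.finrank ℝ D₂ := by
      rw [← hd2, ← hdm, adim, adim, hdir2, ortho_finrank_sup hW2.symm]
    have hOrt : (W ⊔ D₁) ⟂ D₂ := Submodule.isOrtho_sup_left.2 ⟨hW2.symm, h12⟩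
    have hdm' : Module.finrank ℝ W = m := hdm
    have hfin : Module.finrank ℝ (W ⊔ D₁ ⊔ D₂ : Submodule ℝ E)
        = m + Module.finrank ℝ D₁ + Module.finrank ℝ D₂ := by
      rw [ortho_finrank_sup hOrt, ortho_finrank_sup hW1.symm, hdm']
    have hle := Submodule.finrank_le (W ⊔ D₁ ⊔ D₂ : Submodule ℝ E)
    omega
  · intro h
    set n := Module.finrank ℝ E with hn
    set b := stdOrthonormalBasis ℝ E with hb
    let f : Fin m → Fin n := fun i => ⟨i.1, by have := i.2; omega⟩
    let g₁ : Fin (k₁ - m) → Fin n := fun j => ⟨m + j.1, by have := j.2; omega⟩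
    let g₂ : Fin (k₂ - m) → Fin n := fun j => ⟨k₁ + j.1, by have := j.2; omega⟩
    have hf : Function.Injective f := fun a b h => by
      simpa [f, Fin.ext_iff] using h
    have hg₁ : Function.Injective g₁ := fun a b h => by
      simpa [g₁, Fin.ext_iff] using h
    have hg₂ : Function.Injective g₂ := fun a b h => by
      simpa [g₂, Fin.ext_iff] using h
    set W := Submodule.span ℝ (Set.range (⇑b ∘ f)) with hWdef
    set Z₁ := Submodule.span ℝ (Set.range (⇑b ∘ g₁)) with hZ₁def
    set Z₂ := Submodule.span ℝ (Set.range (⇑b ∘ g₂)) with hZ₂def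
    have fW : Module.finrank ℝ W = m := by
      rw [hWdef, finrank_span_eq_card ((b.orthonormal.comp f hf).linearIndependent)]
      simp
    have fZ1 : Module.finrank ℝ Z₁ = k₁ - m := by
      rw [hZ₁def, finrank_span_eq_card ((b.orthonormal.comp g₁ hg₁).linearIndependent)]
      simp
    have fZ2 : Module.finrank ℝ Z₂ = k₂ - m := by
      rw [hZ₂def, finrank_span_eq_card ((b.orthonormal.comp g₂ hg₂).linearIndependent)]
      simp
    have ortho : ∀ (i j : Fin n), i ≠ j → (inner ℝ (b i) (b j) : ℝ) = 0 := fun i j hij =>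
      b.orthonormal.2 hij
    have hWZ1 : W ⟂ Z₁ := by
      rw [hWdef, hZ₁def, Submodule.isOrtho_span]
      rintro u ⟨i, rfl⟩ v ⟨j, rfl⟩
      exact ortho _ _ (by simp [f, g₁, Fin.ext_iff]; omega)
    have hWZ2 : W ⟂ Z₂ := by
      rw [hWdef, hZ₂def, Submodule.isOrtho_span]
      rintro u ⟨i, rfl⟩ v ⟨j, rfl⟩
      exact ortho _ _ (by simp [f, g₂, Fin.ext_iff]; omega)
    have hZ1Z2 : Z₁ ⟂ Z₂ := by
      rw [hZ₁def, hZ₂def, Submodule.isOrtho_span]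
      rintro u ⟨i, rfl⟩ v ⟨j, rfl⟩
      refine ortho _ _ ?_
      have := i.2
      simp [g₁, g₂, Fin.ext_iff]
      omega
    have f1 : Module.finrank ℝ (W ⊔ Z₁ : Submodule ℝ E) = k₁ := by
      rw [ortho_finrank_sup hWZ1, fW, fZ1]; omega
    have f2 : Module.finrank ℝ (W ⊔ Z₂ : Submodule ℝ E) = k₂ := by
      rw [ortho_finrank_sup hWZ2, fW, fZ2]; omega
    have fS : Module.finrank ℝ (W ⊔ Z₁ ⊔ Z₂ : Submodule ℝ E) = k₁ + (k₂ - m) := by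
      rw [ortho_finrank_sup (Submodule.isOrtho_sup_left.2 ⟨hWZ2, hZ1Z2⟩), f1, fZ2]
    have hsupeq : (W ⊔ Z₁) ⊔ (W ⊔ Z₂) = W ⊔ Z₁ ⊔ Z₂ :=
      sup_reassoc W Z₁ Z₂
    have hinfdim : Module.finrank ℝ ((W ⊔ Z₁) ⊓ (W ⊔ Z₂) : Submodule ℝ E) = m := by
      have := Submodule.finrank_sup_add_finrank_inf_eq (W ⊔ Z₁) (W ⊔ Z₂)
      rw [hsupeq, fS, f1, f2] at this
      omega
    have hinf : (W ⊔ Z₁) ⊓ (W ⊔ Z₂) = W := by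
      refine (Submodule.eq_of_le_of_finrank_le (le_inf le_sup_left le_sup_left) ?_).symm
      rw [hinfdim, fW]
    refine ⟨(W ⊔ Z₁).toAffineSubspace, (W ⊔ Z₂).toAffineSubspace,
      ⟨0, by simp [Submodule.mem_toAffineSubspace]⟩,
      ⟨0, by simp [Submodule.mem_toAffineSubspace]⟩, by rw [toAff_adim, f1],
      by rw [toAff_adim, f2], ?_, ?_⟩
    · have hint : (W ⊔ Z₁).toAffineSubspace ⊓ (W ⊔ Z₂).toAffineSubspace
          = W.toAffineSubspace := by rw [toAff_inf, hinf]
      refine ⟨⟨0, ?_, Z₁.toAffineSubspace, Z₂.toAffineSubspace, ?_, ?_, ?_, ?_, ?_, ?_, ?_⟩,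
        ?_, ?_⟩
      · rw [hint]; exact Submodule.mem_toAffineSubspace.2 (Submodule.zero_mem _)
      · exact Submodule.mem_toAffineSubspace.2 (Submodule.zero_mem _)
      · exact Submodule.mem_toAffineSubspace.2 (Submodule.zero_mem _)
      · refine ⟨?_, ⟨0, ?_⟩⟩
        · intro u hu v hv
          rw [Submodule.toAffineSubspace_direction] at hu
          rw [hint, Submodule.toAffineSubspace_direction] at hv
          exact Submodule.isOrtho_iff_inner_eq.1 hWZ1.symm u hu v hv
        · constructor <;>
            simp [hint, Submodule.mem_toAffineSubspace, Submodule.zero_mem]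
      · refine ⟨?_, ⟨0, ?_⟩⟩
        · intro u hu v hv
          rw [Submodule.toAffineSubspace_direction] at hu
          rw [hint, Submodule.toAffineSubspace_direction] at hv
          exact Submodule.isOrtho_iff_inner_eq.1 hWZ2.symm u hu v hv
        · constructor <;>
            simp [hint, Submodule.mem_toAffineSubspace, Submodule.zero_mem]
      · refine ⟨?_, ⟨0, ?_⟩⟩
        · intro u hu v hv
          rw [Submodule.toAffineSubspace_direction] at hu hv
          exact Submodule.isOrtho_iff_inner_eq.1 hZ1Z2 u hu v hv
        · constructor <;>
            simp [Submodule.mem_toAffineSubspace, Submodule.zero_mem]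
      · rw [hint]
        refine AffineSubspace.ext_of_direction_eq ?_ ⟨0, ?_, ?_⟩
        · rw [dir_sup_of_mem (Submodule.mem_toAffineSubspace.2 (Submodule.zero_mem _))
            (Submodule.mem_toAffineSubspace.2 (Submodule.zero_mem _))]
          simp [Submodule.toAffineSubspace_direction]
        · exact SetLike.le_def.1 le_sup_left
            (Submodule.mem_toAffineSubspace.2 (Submodule.zero_mem _))
        · exact Submodule.mem_toAffineSubspace.2 (Submodule.zero_mem _)
      · rw [hint]
        refine AffineSubspace.ext_of_direction_eq ?_ ⟨0, ?_, ?_⟩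
        · rw [dir_sup_of_mem (Submodule.mem_toAffineSubspace.2 (Submodule.zero_mem _))
            (Submodule.mem_toAffineSubspace.2 (Submodule.zero_mem _))]
          simp [Submodule.toAffineSubspace_direction]
        · exact SetLike.le_def.1 le_sup_left
            (Submodule.mem_toAffineSubspace.2 (Submodule.zero_mem _))
        · exact Submodule.mem_toAffineSubspace.2 (Submodule.zero_mem _)
      · intro heq
        have := congrArg adim heq
        rw [hint, toAff_adim, toAff_adim, fW, f1] at this
        omega
      · intro heq
        have := congrArg adim heq
        rw [hint, toAff_adim, toAff_adim, fW, f2] at this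
        omega
    · rw [toAff_inf, hinf, toAff_adim, fW]
end

section
/- Let k₁, k₂, m be natural numbers with m < k₁ ≤ k₂ and k₁ + k₂ − m ≤ dim E. Let Y₁ be a subspace of E with dim Y₁ = k₁ − m and X₂ a subspace with dim X₂ = k₂, such that Y₁ ∩ X₂ is a single point. Then the following are equivalent: (i) Y₁ ⊥g X₂; (ii) for every subspace X₁ with dim X₁ = k₁, Y₁ ⊆ X₁, and dim(X₁ ∩ X₂) = m, one has X₁ ⊥g X₂. -/
variable {E : Type*} [NormedAddCommGroup E] [InnerProductSpace ℝ E] [FiniteDimensional ℝ E]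

open Module Submodule AffineSubspace

lemma mk'_mono' {p : E} {D D' : Submodule ℝ E} (h : D ≤ D') :
    AffineSubspace.mk' p D ≤ AffineSubspace.mk' p D' := fun _ hx =>
  AffineSubspace.mem_mk'.2 (h (AffineSubspace.mem_mk'.1 hx))

set_option maxHeartbeats 1000000 in
lemma direction_sup_of_mem' {A B : AffineSubspace ℝ E} {q : E}
    (hA : q ∈ A) (hB : q ∈ B) : (A ⊔ B).direction = A.direction ⊔ B.direction := by
  apply le_antisymm
  · have h1 : A ⊔ B ≤ AffineSubspace.mk' q (A.direction ⊔ B.direction) := by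
      apply sup_le
      · exact le_trans (AffineSubspace.mk'_eq hA).symm.le (mk'_mono' le_sup_left)
      · exact le_trans (AffineSubspace.mk'_eq hB).symm.le (mk'_mono' le_sup_right)
    have h2 := AffineSubspace.direction_le h1
    rwa [AffineSubspace.direction_mk'] at h2
  · exact sup_le (AffineSubspace.direction_le le_sup_left)
      (AffineSubspace.direction_le le_sup_right)

lemma exists_sub_finrank {D : Submodule ℝ E} {m : ℕ} (h : m ≤ finrank ℝ D) :
    ∃ V : Submodule ℝ E, V ≤ D ∧ finrank ℝ V = m := by
  obtain ⟨f, hf⟩ := exists_linearIndependent_of_le_finrank (R := ℝ) (M := D) h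
  have hf' : LinearIndependent ℝ (D.subtype ∘ f) := hf.map' D.subtype D.ker_subtype
  refine ⟨Submodule.span ℝ (Set.range (D.subtype ∘ f)), ?_, ?_⟩
  · rw [Submodule.span_le]; rintro x ⟨i, rfl⟩; exact (f i).2
  · simpa using finrank_span_eq_card hf'

theorem stmt5 (k₁ k₂ m : ℕ) (hm : m < k₁) (hk : k₁ ≤ k₂)
    (hdim : k₁ + k₂ - m ≤ Module.finrank ℝ E)
    (Y₁ X₂ : AffineSubspace ℝ E)
    (hY₁ : adim Y₁ = k₁ - m) (hX₂ : adim X₂ = k₂)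
    (hpt : ∃ p : E, (Y₁ : Set E) ∩ (X₂ : Set E) = {p}) :
    PerpG Y₁ X₂ ↔
      ∀ X₁ : AffineSubspace ℝ E, (X₁ : Set E).Nonempty → adim X₁ = k₁ → Y₁ ≤ X₁ →
        adim (X₁ ⊓ X₂) = m → PerpG X₁ X₂ := by
  classical
  obtain ⟨p, hpset⟩ := hpt
  have hpmem : p ∈ (Y₁ : Set E) ∩ (X₂ : Set E) := by rw [hpset]; rfl
  have hpY : p ∈ Y₁ := hpmem.1
  have hpX : p ∈ X₂ := hpmem.2
  have hY₁' : finrank ℝ Y₁.direction = k₁ - m := hY₁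
  have hX₂' : finrank ℝ X₂.direction = k₂ := hX₂
  have hdirbot : Y₁.direction ⊓ X₂.direction = ⊥ := by
    rw [eq_bot_iff]
    intro v hv
    obtain ⟨hv1, hv2⟩ := Submodule.mem_inf.1 hv
    have h1 : v +ᵥ p ∈ (Y₁ : Set E) ∩ (X₂ : Set E) :=
      ⟨AffineSubspace.vadd_mem_of_mem_direction hv1 hpY,
       AffineSubspace.vadd_mem_of_mem_direction hv2 hpX⟩
    rw [hpset, Set.mem_singleton_iff] at h1
    have hv0 : v = 0 := by
      have := congrArg (· -ᵥ p) h1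
      simpa using this
    simp [hv0]
  have hp_inf : p ∈ Y₁ ⊓ X₂ := ⟨hpY, hpX⟩
  have hW0set : ((Y₁ ⊓ X₂ : AffineSubspace ℝ E) : Set E) = {p} := by
    exact (AffineSubspace.coe_inf Y₁ X₂).trans hpset
  have hW0dir : (Y₁ ⊓ X₂).direction = ⊥ := by
    show vectorSpan ℝ ((Y₁ ⊓ X₂ : AffineSubspace ℝ E) : Set E) = ⊥
    rw [hW0set]
    exact vectorSpan_singleton ℝ p
  -- PerpG ↔ Perp in the point-intersection case
  have hGo_to_perp : PerpG Y₁ X₂ → Perp Y₁ X₂ := by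
    rintro ⟨⟨q, hq, Z₁, Z₂, hqZ₁, hqZ₂, _, _, ⟨hZperp, _⟩, hs₁, hs₂⟩, _, _⟩
    have hle₁ : Y₁ ⊓ X₂ ≤ Z₁ := by
      intro x hx
      have hx' : x ∈ ((Y₁ ⊓ X₂ : AffineSubspace ℝ E) : Set E) := hx
      rw [hW0set, Set.mem_singleton_iff] at hx'
      have hq' : q ∈ ((Y₁ ⊓ X₂ : AffineSubspace ℝ E) : Set E) := hq
      rw [hW0set, Set.mem_singleton_iff] at hq'
      rw [hx', ← hq']; exact hqZ₁
    have hle₂ : Y₁ ⊓ X₂ ≤ Z₂ := by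
      intro x hx
      have hx' : x ∈ ((Y₁ ⊓ X₂ : AffineSubspace ℝ E) : Set E) := hx
      rw [hW0set, Set.mem_singleton_iff] at hx'
      have hq' : q ∈ ((Y₁ ⊓ X₂ : AffineSubspace ℝ E) : Set E) := hq
      rw [hW0set, Set.mem_singleton_iff] at hq'
      rw [hx', ← hq']; exact hqZ₂
    have hZ₁ : Z₁ = Y₁ := by rw [← hs₁]; exact (sup_eq_right.2 hle₁).symm
    have hZ₂ : Z₂ = X₂ := by rw [← hs₂]; exact (sup_eq_right.2 hle₂).symm
    subst hZ₁; subst hZ₂; exact hZperp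
  have hperp_to_G : Perp Y₁ X₂ → PerpG Y₁ X₂ := by
    intro hperp
    refine ⟨⟨p, hp_inf, Y₁, X₂, hpY, hpX, ?_, ?_, ⟨hperp, ⟨p, hpY, hpX⟩⟩,
      sup_eq_right.2 inf_le_left, sup_eq_right.2 inf_le_right⟩, ?_, ?_⟩
    · refine ⟨fun u _ v hv => ?_, ⟨p, hpY, hp_inf⟩⟩
      rw [hW0dir, Submodule.mem_bot] at hv
      simp [hv]
    · refine ⟨fun u _ v hv => ?_, ⟨p, hpX, hp_inf⟩⟩
      rw [hW0dir, Submodule.mem_bot] at hv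
      simp [hv]
    · intro h
      have hd := congrArg AffineSubspace.direction h
      rw [hW0dir] at hd
      have : finrank ℝ Y₁.direction = 0 := by rw [← hd, finrank_bot]
      omega
    · intro h
      have hd := congrArg AffineSubspace.direction h
      rw [hW0dir] at hd
      have : finrank ℝ X₂.direction = 0 := by rw [← hd, finrank_bot]
      omega
  constructor
  · -- forward
    intro hG X₁ _hne h1 hYX1 hWm
    have hperp := hGo_to_perp hG
    have h1' : finrank ℝ X₁.direction = k₁ := h1
    have hWm' : finrank ℝ (X₁ ⊓ X₂).direction = m := hWm
    have hpX1 : p ∈ X₁ := hYX1 hpY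
    have hpW : p ∈ X₁ ⊓ X₂ := ⟨hpX1, hpX⟩
    have hWdir : (X₁ ⊓ X₂).direction = X₁.direction ⊓ X₂.direction :=
      AffineSubspace.direction_inf_of_mem hpX1 hpX
    have hVX2 : (X₁ ⊓ X₂).direction ≤ X₂.direction := by rw [hWdir]; exact inf_le_right
    have hVX1 : (X₁ ⊓ X₂).direction ≤ X₁.direction := by rw [hWdir]; exact inf_le_left
    have hY1V : Y₁.direction ⊓ (X₁ ⊓ X₂).direction = ⊥ := by
      rw [eq_bot_iff, ← hdirbot]
      exact inf_le_inf_left _ hVX2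
    have hsumrank : finrank ℝ (Y₁.direction ⊔ (X₁ ⊓ X₂).direction : Submodule ℝ E) = k₁ := by
      have hh := Submodule.finrank_sup_add_finrank_inf_eq Y₁.direction (X₁ ⊓ X₂).direction
      rw [hY1V, finrank_bot, add_zero, hY₁', hWm'] at hh
      omega
    have hX1dir : X₁.direction = Y₁.direction ⊔ (X₁ ⊓ X₂).direction := by
      symm
      exact Submodule.eq_of_le_of_finrank_eq
        (sup_le (AffineSubspace.direction_le hYX1) hVX1) (by rw [hsumrank, h1'])
    have hsupU : (X₁ ⊓ X₂).direction ⊔ ((X₁ ⊓ X₂).directionᗮ ⊓ X₂.direction) = X₂.direction :=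
      Submodule.sup_orthogonal_inf_of_hasOrthogonalProjection hVX2
    refine ⟨⟨p, hpW, Y₁, AffineSubspace.mk' p ((X₁ ⊓ X₂).directionᗮ ⊓ X₂.direction), hpY,
      AffineSubspace.self_mem_mk' _ _, ?_, ?_, ?_, ?_, ?_⟩, ?_, ?_⟩
    · exact ⟨fun u hu v hv => hperp u hu v (hVX2 hv), ⟨p, hpY, hpW⟩⟩
    · refine ⟨fun u hu v hv => ?_, ⟨p, AffineSubspace.self_mem_mk' _ _, hpW⟩⟩
      rw [AffineSubspace.direction_mk'] at hu
      exact (Submodule.mem_orthogonal' _ _).1 (Submodule.mem_inf.1 hu).1 v hv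
    · refine ⟨fun u hu v hv => ?_, ⟨p, hpY, AffineSubspace.self_mem_mk' _ _⟩⟩
      rw [AffineSubspace.direction_mk'] at hv
      exact hperp u hu v (Submodule.mem_inf.1 hv).2
    · rw [AffineSubspace.eq_iff_direction_eq_of_mem
        ((le_sup_left : X₁ ⊓ X₂ ≤ (X₁ ⊓ X₂) ⊔ Y₁) hpW) hpX1]
      rw [direction_sup_of_mem' hpW hpY, hX1dir, sup_comm]
    · rw [AffineSubspace.eq_iff_direction_eq_of_mem
        ((le_sup_left : X₁ ⊓ X₂ ≤ (X₁ ⊓ X₂) ⊔ _) hpW) hpX]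
      rw [direction_sup_of_mem' hpW (AffineSubspace.self_mem_mk' _ _),
        AffineSubspace.direction_mk']
      exact hsupU
    · intro h
      have : m = k₁ := by rw [← hWm', ← h1', h]
      omega
    · intro h
      have : m = k₂ := by rw [← hWm', ← hX₂', h]
      omega
  · -- backward
    intro hAll
    apply hperp_to_G
    have horth := Submodule.finrank_add_finrank_orthogonal (K := Y₁.direction)
    have hDrank : m ≤ finrank ℝ (X₂.direction ⊓ Y₁.directionᗮ : Submodule ℝ E) := by
      have hh := Submodule.finrank_sup_add_finrank_inf_eq X₂.direction Y₁.directionᗮ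
      have h2 : finrank ℝ (X₂.direction ⊔ Y₁.directionᗮ : Submodule ℝ E) ≤ finrank ℝ E :=
        Submodule.finrank_le _
      rw [hX₂'] at hh
      rw [hY₁'] at horth
      omega
    obtain ⟨V, hVD, hVrank⟩ := exists_sub_finrank hDrank
    have hVX2 : V ≤ X₂.direction := hVD.trans inf_le_left
    have hVYo : V ≤ Y₁.directionᗮ := hVD.trans inf_le_right
    have hY1Vo : Y₁.direction ≤ Vᗮ := by
      intro y hy
      rw [Submodule.mem_orthogonal]
      intro v hv
      exact (Submodule.mem_orthogonal' _ _).1 (hVYo hv) y hy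
    have hY1V : Y₁.direction ⊓ V = ⊥ := by
      rw [eq_bot_iff, ← hdirbot]
      exact inf_le_inf_left _ hVX2
    set X₁ := AffineSubspace.mk' p (Y₁.direction ⊔ V) with hX₁def
    have hpX1 : p ∈ X₁ := AffineSubspace.self_mem_mk' _ _
    have hX1dir : X₁.direction = Y₁.direction ⊔ V := AffineSubspace.direction_mk' _ _
    have h1 : adim X₁ = k₁ := by
      show finrank ℝ X₁.direction = k₁
      rw [hX1dir]
      have hh := Submodule.finrank_sup_add_finrank_inf_eq Y₁.direction V
      rw [hY1V, finrank_bot, add_zero, hY₁', hVrank] at hh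
      omega
    have hYleX1 : Y₁ ≤ X₁ := by
      intro x hx
      exact AffineSubspace.mem_mk'.2
        ((le_sup_left : Y₁.direction ≤ Y₁.direction ⊔ V)
          (AffineSubspace.vsub_mem_direction hx hpY))
    have hpW : p ∈ X₁ ⊓ X₂ := ⟨hpX1, hpX⟩
    have hWdir : (X₁ ⊓ X₂).direction = V := by
      rw [AffineSubspace.direction_inf_of_mem hpX1 hpX, hX1dir]
      apply le_antisymm
      · intro x hx
        obtain ⟨hx1, hx2⟩ := Submodule.mem_inf.1 hx
        obtain ⟨y, hy, v, hv, rfl⟩ := Submodule.mem_sup.1 hx1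
        have hyX2 : y ∈ X₂.direction := by
          have hyv : y = y + v - v := by abel
          rw [hyv]
          exact Submodule.sub_mem _ hx2 (hVX2 hv)
        have hy0 : y = 0 := by
          have hyb : y ∈ Y₁.direction ⊓ X₂.direction := Submodule.mem_inf.2 ⟨hy, hyX2⟩
          rw [hdirbot, Submodule.mem_bot] at hyb
          exact hyb
        simpa [hy0] using hv
      · exact le_inf le_sup_right hVX2
    have hWm : adim (X₁ ⊓ X₂) = m := by
      show finrank ℝ (X₁ ⊓ X₂).direction = m
      rw [hWdir, hVrank]
    obtain ⟨⟨q, hq, Z₁, Z₂, hqZ₁, hqZ₂, ⟨hpZ₁W, _⟩, ⟨hpZ₂W, _⟩, ⟨hpZ₁Z₂, _⟩, hs₁, hs₂⟩, _, _⟩ :=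
      hAll X₁ ⟨p, hpX1⟩ h1 hYleX1 hWm
    have hdX1 : X₁.direction = V ⊔ Z₁.direction := by
      conv_lhs => rw [← hs₁]
      rw [direction_sup_of_mem' hq hqZ₁, hWdir]
    have hdX2 : X₂.direction = V ⊔ Z₂.direction := by
      conv_lhs => rw [← hs₂]
      rw [direction_sup_of_mem' hq hqZ₂, hWdir]
    have hZ₁Vo : Z₁.direction ≤ Vᗮ := by
      intro u hu
      rw [Submodule.mem_orthogonal']
      intro w hw
      exact hpZ₁W u hu w (by rw [hWdir]; exact hw)
    have hVbotZ₁ : V ⊓ Z₁.direction = ⊥ := by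
      rw [eq_bot_iff]
      intro v hv
      obtain ⟨hv1, hv2⟩ := Submodule.mem_inf.1 hv
      have : v ∈ V ⊓ Vᗮ := Submodule.mem_inf.2 ⟨hv1, hZ₁Vo hv2⟩
      rwa [Submodule.inf_orthogonal_eq_bot] at this
    have hZ₁rank : finrank ℝ Z₁.direction = k₁ - m := by
      have hh := Submodule.finrank_sup_add_finrank_inf_eq V Z₁.direction
      rw [hVbotZ₁, finrank_bot, add_zero, ← hdX1, hVrank] at hh
      have h1' : finrank ℝ X₁.direction = k₁ := h1
      omega
    have hZ₁leY : Z₁.direction ≤ Y₁.direction := by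
      intro u hu
      have hZX : Z₁.direction ≤ X₁.direction := by rw [hdX1]; exact le_sup_right
      have huX1 : u ∈ Y₁.direction ⊔ V := by rw [← hX1dir]; exact hZX hu
      obtain ⟨y, hy, v, hv, rfl⟩ := Submodule.mem_sup.1 huX1
      have hvVo : v ∈ Vᗮ := by
        have hvv : v = y + v - y := by abel
        rw [hvv]
        exact Submodule.sub_mem _ (hZ₁Vo hu) (hY1Vo hy)
      have hv0 : v = 0 := by
        have : v ∈ V ⊓ Vᗮ := Submodule.mem_inf.2 ⟨hv, hvVo⟩
        rwa [Submodule.inf_orthogonal_eq_bot, Submodule.mem_bot] at this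
      simpa [hv0] using hy
    have hZ₁eq : Z₁.direction = Y₁.direction :=
      Submodule.eq_of_le_of_finrank_eq hZ₁leY (by rw [hZ₁rank, hY₁'])
    intro u hu x hx
    rw [hdX2] at hx
    obtain ⟨v, hv, z, hz, rfl⟩ := Submodule.mem_sup.1 hx
    have hiv : (inner ℝ u v : ℝ) = 0 :=
      (Submodule.mem_orthogonal' _ _).1 (hY1Vo hu) v hv
    have hiz : (inner ℝ u z : ℝ) = 0 := hpZ₁Z₂ u (by rw [hZ₁eq]; exact hu) z hz
    rw [inner_add_right, hiv, hiz, add_zero]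
end

section
/- Let k₁, k₂ be natural numbers with 1 ≤ k₁, 1 < k₂, and k₁ + k₂ ≤ dim E. Then for lines L₁, L₂ (one-dimensional subspaces of E) the following are equivalent: (i) L₁ ⊥ L₂; (ii) there exist subspaces X₁, X₂ of E with dim X₁ = k₁, dim X₂ = k₂, X₁ ⊥x X₂, L₁ ⊆ X₁, and L₂ ⊆ X₂. -/
variable {E : Type*} [NormedAddCommGroup E] [InnerProductSpace ℝ E] [FiniteDimensional ℝ E]

open Module Submodule

lemma exists_between_finrank {E : Type*} [NormedAddCommGroup E] [InnerProductSpace ℝ E]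
    [FiniteDimensional ℝ E] (p t : Submodule ℝ E) (hpt : p ≤ t) (k : ℕ)
    (h1 : finrank ℝ p ≤ k) (h2 : k ≤ finrank ℝ t) :
    ∃ q : Submodule ℝ E, p ≤ q ∧ q ≤ t ∧ finrank ℝ q = k := by
  induction k, h1 using Nat.le_induction with
  | base => exact ⟨p, le_rfl, hpt, rfl⟩
  | succ k hk ih =>
    obtain ⟨q, hpq, hqt, hq⟩ := ih (le_trans (Nat.le_succ k) h2)
    have hlt : ¬ t ≤ q := fun h => by
      have := Submodule.finrank_mono (R := ℝ) (M := E) h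
      omega
    obtain ⟨x, hxt, hxq⟩ := SetLike.not_le_iff_exists.mp hlt
    have hx0 : x ≠ 0 := fun h => hxq (h ▸ q.zero_mem)
    refine ⟨q ⊔ (ℝ ∙ x), le_trans hpq le_sup_left, sup_le hqt ((span_singleton_le_iff_mem x t).mpr hxt), ?_⟩
    have hdisj : q ⊓ (ℝ ∙ x) = ⊥ := by
      exact ((Submodule.disjoint_span_singleton' hx0).mpr hxq).eq_bot
    have := Submodule.finrank_sup_add_finrank_inf_eq q (ℝ ∙ x)
    rw [hdisj, finrank_bot, finrank_span_singleton hx0] at this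
    omega


theorem stmt6 (k₁ k₂ : ℕ) (hk₁ : 1 ≤ k₁) (hk₂ : 1 < k₂)
    (hdim : k₁ + k₂ ≤ Module.finrank ℝ E)
    (L₁ L₂ : AffineSubspace ℝ E)
    (hL₁ : (L₁ : Set E).Nonempty) (hL₂ : (L₂ : Set E).Nonempty)
    (hL₁d : adim L₁ = 1) (hL₂d : adim L₂ = 1) :
    Perp L₁ L₂ ↔
      ∃ X₁ X₂ : AffineSubspace ℝ E, (X₁ : Set E).Nonempty ∧ (X₂ : Set E).Nonempty ∧
        adim X₁ = k₁ ∧ adim X₂ = k₂ ∧ PerpX X₁ X₂ ∧ L₁ ≤ X₁ ∧ L₂ ≤ X₂ := by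
  constructor
  · intro hperp
    obtain ⟨p₁, hp₁⟩ := hL₁
    obtain ⟨p₂, hp₂⟩ := hL₂
    set d₁ := L₁.direction with hd₁def
    set d₂ := L₂.direction with hd₂def
    have hd₁₂ : d₁ ≤ d₂ᗮ := fun u hu =>
      (Submodule.mem_orthogonal' d₂ u).mpr (fun z hz => hperp u hu z hz)
    have hd₂₁ : d₂ ≤ d₁ᗮ := fun u hu =>
      (Submodule.mem_orthogonal d₁ u).mpr (fun z hz => hperp z hz u hu)
    set S := d₁ ⊔ d₂ with hSdef
    set W := Sᗮ with hWdef
    have hWd₁ : W ≤ d₁ᗮ := Submodule.orthogonal_le le_sup_left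
    have hWd₂ : W ≤ d₂ᗮ := Submodule.orthogonal_le le_sup_right
    have hd₁d₂bot : d₁ ⊓ d₂ = ⊥ := ((Submodule.orthogonal_disjoint d₂).symm.mono_left hd₁₂).eq_bot
    have fL₁ : finrank ℝ d₁ = 1 := hL₁d
    have fL₂ : finrank ℝ d₂ = 1 := hL₂d
    have fS : finrank ℝ S = 2 := by
      have h : finrank ℝ S + finrank ℝ ↥(d₁ ⊓ d₂) = finrank ℝ d₁ + finrank ℝ d₂ :=
        Submodule.finrank_sup_add_finrank_inf_eq d₁ d₂
      rw [hd₁d₂bot, finrank_bot, fL₁, fL₂] at h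
      omega
    have fW : finrank ℝ W = finrank ℝ E - 2 := by
      have h : finrank ℝ S + finrank ℝ W = finrank ℝ E :=
        Submodule.finrank_add_finrank_orthogonal (K := S)
      omega
    set v := p₂ - p₁ with hvdef
    set a₁ := (orthogonalProjection d₁ v : E) with ha₁def
    set a₂ := (orthogonalProjection d₂ v : E) with ha₂def
    set w := v - a₁ - a₂ with hwdef
    have ha₁ : a₁ ∈ d₁ := SetLike.coe_mem _
    have ha₂ : a₂ ∈ d₂ := SetLike.coe_mem _
    have hwW : w ∈ W := by
      rw [hWdef, hSdef, ← Submodule.inf_orthogonal]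
      constructor
      · have h1 : v - a₁ ∈ d₁ᗮ := Submodule.sub_starProjection_mem_orthogonal v
        exact Submodule.sub_mem _ h1 (hd₂₁ ha₂)
      · have h1 : v - a₂ ∈ d₂ᗮ := Submodule.sub_starProjection_mem_orthogonal v
        have : w = (v - a₂) - a₁ := by rw [hwdef]; abel
        rw [this]
        exact Submodule.sub_mem _ h1 (hd₁₂ ha₁)
    -- choose W₂
    have hspanle : (ℝ ∙ w) ≤ W := (span_singleton_le_iff_mem w W).mpr hwW
    have hspanrank : finrank ℝ (ℝ ∙ w) ≤ k₂ - 1 := by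
      by_cases hw0 : w = 0
      · rw [hw0, span_zero_singleton, finrank_bot]; omega
      · rw [finrank_span_singleton hw0]; omega
    obtain ⟨W₂, hwW₂, hW₂W, fW₂⟩ := exists_between_finrank (ℝ ∙ w) W hspanle (k₂ - 1)
      hspanrank (by omega)
    -- choose W₁
    have fW₂o : finrank ℝ W₂ᗮ = finrank ℝ E - (k₂ - 1) := by
      have := Submodule.finrank_add_finrank_orthogonal (K := W₂)
      omega
    have hinfrank : k₁ - 1 ≤ finrank ℝ ↥(W ⊓ W₂ᗮ) := by
      have h1 : finrank ℝ ↥(W ⊔ W₂ᗮ) + finrank ℝ ↥(W ⊓ W₂ᗮ)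
          = finrank ℝ W + finrank ℝ W₂ᗮ :=
        Submodule.finrank_sup_add_finrank_inf_eq W W₂ᗮ
      have h2 : finrank ℝ ↥(W ⊔ W₂ᗮ) ≤ finrank ℝ E := Submodule.finrank_le _
      omega
    obtain ⟨W₁, -, hW₁le, fW₁⟩ := exists_between_finrank ⊥ (W ⊓ W₂ᗮ) bot_le (k₁ - 1)
      (by rw [finrank_bot]; omega) hinfrank
    have hW₁W : W₁ ≤ W := hW₁le.trans inf_le_left
    have hW₁W₂ : W₁ ≤ W₂ᗮ := hW₁le.trans inf_le_right
    set D₁ := d₁ ⊔ W₁ with hD₁def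
    set D₂ := d₂ ⊔ W₂ with hD₂def
    -- D₁ ⊥ D₂
    have hD : D₁ ≤ D₂ᗮ := by
      rw [hD₂def, ← Submodule.inf_orthogonal]
      refine sup_le (le_inf hd₁₂ ?_) (le_inf ?_ hW₁W₂)
      · intro u hu
        rw [Submodule.mem_orthogonal]
        intro z hz
        have := hW₂W.trans hWd₁ hz
        rw [Submodule.mem_orthogonal] at this
        rw [real_inner_comm]
        exact this u hu
      · intro u hu
        rw [Submodule.mem_orthogonal]
        intro z hz
        have := hW₁W.trans hWd₂ hu
        rw [Submodule.mem_orthogonal] at this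
        exact this z hz
    have hd₁W₁bot : d₁ ⊓ W₁ = ⊥ :=
      ((Submodule.orthogonal_disjoint d₁).mono_right (hW₁W.trans hWd₁)).eq_bot
    have hd₂W₂bot : d₂ ⊓ W₂ = ⊥ :=
      ((Submodule.orthogonal_disjoint d₂).mono_right (hW₂W.trans hWd₂)).eq_bot
    have fD₁ : finrank ℝ D₁ = k₁ := by
      have h : finrank ℝ D₁ + finrank ℝ ↥(d₁ ⊓ W₁) = finrank ℝ d₁ + finrank ℝ W₁ :=
        Submodule.finrank_sup_add_finrank_inf_eq d₁ W₁
      rw [hd₁W₁bot, finrank_bot, fL₁, fW₁] at h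
      omega
    have fD₂ : finrank ℝ D₂ = k₂ := by
      have h : finrank ℝ D₂ + finrank ℝ ↥(d₂ ⊓ W₂) = finrank ℝ d₂ + finrank ℝ W₂ :=
        Submodule.finrank_sup_add_finrank_inf_eq d₂ W₂
      rw [hd₂W₂bot, finrank_bot, fL₂, fW₂] at h
      omega
    set q := a₁ + p₁ with hqdef
    refine ⟨AffineSubspace.mk' q D₁, AffineSubspace.mk' q D₂,
      ⟨q, AffineSubspace.self_mem_mk' q D₁⟩, ⟨q, AffineSubspace.self_mem_mk' q D₂⟩, ?_, ?_, ?_, ?_, ?_⟩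
    · show finrank ℝ (AffineSubspace.mk' q D₁).direction = k₁
      rw [AffineSubspace.direction_mk']; exact fD₁
    · show finrank ℝ (AffineSubspace.mk' q D₂).direction = k₂
      rw [AffineSubspace.direction_mk']; exact fD₂
    · constructor
      · intro u hu z hz
        rw [AffineSubspace.direction_mk'] at hu hz
        have := hD hu
        rw [Submodule.mem_orthogonal'] at this
        exact this z hz
      · exact ⟨q, AffineSubspace.self_mem_mk' q D₁, AffineSubspace.self_mem_mk' q D₂⟩
    · intro x hx
      show x ∈ AffineSubspace.mk' q D₁
      rw [AffineSubspace.mem_mk']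
      have hx1 : x - p₁ ∈ d₁ := AffineSubspace.vsub_mem_direction hx hp₁
      have : x -ᵥ q = (x - p₁) - a₁ := by
        show x - q = (x - p₁) - a₁
        rw [hqdef]; abel
      rw [this]
      exact le_sup_left (α := Submodule ℝ E) (Submodule.sub_mem _ hx1 ha₁)
    · intro x hx
      show x ∈ AffineSubspace.mk' q D₂
      rw [AffineSubspace.mem_mk']
      have hx2 : x - p₂ ∈ d₂ := AffineSubspace.vsub_mem_direction hx hp₂
      have heq : x -ᵥ q = ((x - p₂) + a₂) + w := by
        show x - q = ((x - p₂) + a₂) + w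
        rw [hqdef, hwdef, hvdef]; abel
      rw [heq]
      exact Submodule.add_mem_sup (Submodule.add_mem _ hx2 ha₂)
        (hwW₂ (Submodule.mem_span_singleton_self w))
  · rintro ⟨X₁, X₂, -, -, -, -, ⟨hP, -⟩, h₁, h₂⟩
    intro u hu z hz
    exact hP u (AffineSubspace.direction_le h₁ hu) z (AffineSubspace.direction_le h₂ hz)
end

section
/- Let A, B, C be subspaces of E. If A ⊥g B, B is parallel to C, and A ∩ C ≠ ∅, then A ⊥g C. -/
open Pointwise

variable {E : Type*} [NormedAddCommGroup E] [InnerProductSpace ℝ E] [FiniteDimensional ℝ E]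


open Pointwise in
lemma vadd_mono {v : E} {X Y : AffineSubspace ℝ E} (h : X ≤ Y) : v +ᵥ X ≤ v +ᵥ Y := by
  intro p hp
  rw [AffineSubspace.pointwise_vadd_eq_map, AffineSubspace.mem_map] at hp ⊢
  obtain ⟨x, hx, rfl⟩ := hp
  exact ⟨x, h hx, rfl⟩

open Pointwise in
lemma vadd_sup (v : E) (X Y : AffineSubspace ℝ E) :
    v +ᵥ (X ⊔ Y) = (v +ᵥ X) ⊔ (v +ᵥ Y) := by
  apply le_antisymm
  · have : X ⊔ Y ≤ -v +ᵥ ((v +ᵥ X) ⊔ (v +ᵥ Y)) := by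
      apply sup_le
      · have := vadd_mono (v := -v) (le_sup_left : v +ᵥ X ≤ (v +ᵥ X) ⊔ (v +ᵥ Y))
        simpa using this
      · have := vadd_mono (v := -v) (le_sup_right : v +ᵥ Y ≤ (v +ᵥ X) ⊔ (v +ᵥ Y))
        simpa using this
    have := vadd_mono (v := v) this
    simpa using this
  · exact sup_le (vadd_mono le_sup_left) (vadd_mono le_sup_right)

open Pointwise in
lemma vadd_eq_self {v : E} {X : AffineSubspace ℝ E} (hv : v ∈ X.direction)
    {q : E} (hq : q ∈ X) : v +ᵥ X = X := by
  apply AffineSubspace.ext_of_direction_eq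
  · rw [AffineSubspace.pointwise_vadd_direction]
  · exact ⟨v +ᵥ q, AffineSubspace.vadd_mem_pointwise_vadd_iff.2 hq,
      AffineSubspace.vadd_mem_of_mem_direction hv hq⟩


theorem stmt7 (A B C : AffineSubspace ℝ E)
    (hA : (A : Set E).Nonempty) (hB : (B : Set E).Nonempty) (hC : (C : Set E).Nonempty)
    (h₁ : PerpG A B) (h₂ : AffineSubspace.Parallel B C)
    (h₃ : ((A : Set E) ∩ (C : Set E)).Nonempty) :
    PerpG A C := by
  obtain ⟨⟨q, hq, Z₁, Z₂, hqZ₁, hqZ₂, hP₁, hP₂, hP₁₂, hS₁, hS₂⟩, hne₁, hne₂⟩ := h₁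
  obtain ⟨p, hpA, hpC⟩ := h₃
  obtain ⟨hqA, hqB⟩ := (AffineSubspace.mem_inf_iff q A B).1 hq
  set w : E := p -ᵥ q with hw
  have hpq : p = w +ᵥ q := (vsub_vadd p q).symm
  have hdirBC : B.direction = C.direction := h₂.direction_eq
  -- directions of the intersections agree
  have hdAB : (A ⊓ B).direction = A.direction ⊓ B.direction :=
    AffineSubspace.direction_inf_of_mem hqA hqB
  have hdAC : (A ⊓ C).direction = A.direction ⊓ C.direction :=
    AffineSubspace.direction_inf_of_mem hpA hpC
  have hdd : (A ⊓ B).direction = (A ⊓ C).direction := by rw [hdAB, hdAC, hdirBC]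
  have hwA : w ∈ A.direction := AffineSubspace.vsub_mem_direction hpA hqA
  -- translating by w
  have hAw : w +ᵥ A = A := vadd_eq_self hwA hqA
  have hBw : w +ᵥ B = C := by
    apply AffineSubspace.ext_of_direction_eq
    · rw [AffineSubspace.pointwise_vadd_direction, hdirBC]
    · exact ⟨p, by rw [hpq]; exact AffineSubspace.vadd_mem_pointwise_vadd_iff.2 hqB, hpC⟩
  have hIw : w +ᵥ (A ⊓ B) = A ⊓ C := by
    apply AffineSubspace.ext_of_direction_eq
    · rw [AffineSubspace.pointwise_vadd_direction, hdd]
    · refine ⟨p, by rw [hpq]; exact AffineSubspace.vadd_mem_pointwise_vadd_iff.2 hq, ?_⟩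
      exact (AffineSubspace.mem_inf_iff p A C).2 ⟨hpA, hpC⟩
  -- the translated Z's
  have hZd₁ : (w +ᵥ Z₁).direction = Z₁.direction := AffineSubspace.pointwise_vadd_direction w Z₁
  have hZd₂ : (w +ᵥ Z₂).direction = Z₂.direction := AffineSubspace.pointwise_vadd_direction w Z₂
  have hpI : p ∈ A ⊓ C := (AffineSubspace.mem_inf_iff p A C).2 ⟨hpA, hpC⟩
  refine ⟨⟨p, hpI, w +ᵥ Z₁, w +ᵥ Z₂, ?_, ?_, ?_, ?_, ?_, ?_, ?_⟩, ?_, ?_⟩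
  · rw [hpq]; exact AffineSubspace.vadd_mem_pointwise_vadd_iff.2 hqZ₁
  · rw [hpq]; exact AffineSubspace.vadd_mem_pointwise_vadd_iff.2 hqZ₂
  · refine ⟨fun u hu v hv => hP₁.1 u (hZd₁ ▸ hu) v (hdd ▸ hv), ?_⟩
    exact ⟨p, (by rw [hpq]; exact AffineSubspace.vadd_mem_pointwise_vadd_iff.2 hqZ₁), hpI⟩
  · refine ⟨fun u hu v hv => hP₂.1 u (hZd₂ ▸ hu) v (hdd ▸ hv), ?_⟩
    exact ⟨p, (by rw [hpq]; exact AffineSubspace.vadd_mem_pointwise_vadd_iff.2 hqZ₂), hpI⟩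
  · refine ⟨fun u hu v hv => hP₁₂.1 u (hZd₁ ▸ hu) v (hZd₂ ▸ hv), ?_⟩
    exact ⟨p, (by rw [hpq]; exact AffineSubspace.vadd_mem_pointwise_vadd_iff.2 hqZ₁),
      (by rw [hpq]; exact AffineSubspace.vadd_mem_pointwise_vadd_iff.2 hqZ₂)⟩
  · rw [← hIw, ← vadd_sup, hS₁, hAw]
  · rw [← hIw, ← vadd_sup, hS₂, hBw]
  · intro h
    apply hne₁
    apply AffineSubspace.ext_of_direction_eq
    · rw [hdd]; rw [h]
    · exact ⟨q, hq, hqA⟩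
  · intro h
    apply hne₂
    apply AffineSubspace.ext_of_direction_eq
    · rw [hdd, h, hdirBC]
    · exact ⟨q, hq, hqB⟩
end

section
/- Let A, B, C be subspaces of E with A ⊊ B ⊊ C (A nonempty). Then there is a unique subspace B' of E such that B ∩ B' = A, B ⊥g B', and B ⊔ B' = C. -/
variable {E : Type*} [NormedAddCommGroup E] [InnerProductSpace ℝ E] [FiniteDimensional ℝ E]

open AffineSubspace

omit [FiniteDimensional ℝ E] in
lemma le_mk'_of {S : AffineSubspace ℝ E} {a : E} {d : Submodule ℝ E}
    (ha : a ∈ S) (hd : S.direction ≤ d) : S ≤ AffineSubspace.mk' a d := by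
  intro x hx
  exact AffineSubspace.mem_mk'.mpr (hd (vsub_mem_direction hx ha))

omit [FiniteDimensional ℝ E] in
lemma direction_sup_of_mem_s8 {S T : AffineSubspace ℝ E} {q : E} (hS : q ∈ S) (hT : q ∈ T) :
    (S ⊔ T).direction = S.direction ⊔ T.direction := by
  apply le_antisymm
  · have h : S ⊔ T ≤ AffineSubspace.mk' q (S.direction ⊔ T.direction) :=
      sup_le (le_mk'_of hS le_sup_left) (le_mk'_of hT le_sup_right)
    simpa using direction_le h
  · exact sup_le (direction_le le_sup_left) (direction_le le_sup_right)

omit [FiniteDimensional ℝ E] in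
lemma join_mk' {S : AffineSubspace ℝ E} {a : E} (ha : a ∈ S) (d : Submodule ℝ E) :
    S ⊔ AffineSubspace.mk' a d = AffineSubspace.mk' a (S.direction ⊔ d) := by
  apply ext_of_direction_eq
  · rw [direction_sup_of_mem_s8 ha (self_mem_mk' a d), direction_mk', direction_mk']
  · exact ⟨a, (le_sup_left : S ≤ _) ha, self_mem_mk' _ _⟩

set_option maxHeartbeats 1000000 in
theorem stmt8 (A B C : AffineSubspace ℝ E)
    (hA : (A : Set E).Nonempty) (hAB : A < B) (hBC : B < C) :
    ∃! B' : AffineSubspace ℝ E, B ⊓ B' = A ∧ PerpG B B' ∧ B ⊔ B' = C := by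
  obtain ⟨a, haA⟩ := hA
  have haB : a ∈ B := hAB.le haA
  have haC : a ∈ C := hBC.le haB
  have hdirAB : A.direction ≤ B.direction := direction_le hAB.le
  have hdirBC : B.direction ≤ C.direction := direction_le hBC.le
  set W : Submodule ℝ E := B.directionᗮ ⊓ C.direction with hWdef
  have hsupW : B.direction ⊔ W = C.direction :=
    Submodule.sup_orthogonal_inf_of_hasOrthogonalProjection hdirBC
  have hWneq : W ≠ ⊥ := by
    intro h
    have : B.direction = C.direction := by rw [← hsupW, h, sup_bot_eq]
    exact (direction_lt_of_nonempty hBC ⟨a, haB⟩).ne this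
  have hWperp : ∀ w ∈ W, ∀ b ∈ B.direction, (inner ℝ w b : ℝ) = 0 := by
    intro w hw b hb
    rw [real_inner_comm]
    exact hw.1 b hb
  have hWinterB : ∀ w ∈ W, w ∈ B.direction → w = 0 := by
    intro w hw hwB
    have := hw.1 w hwB
    rwa [inner_self_eq_zero] at this
  set B' := AffineSubspace.mk' a (A.direction ⊔ W) with hB'def
  have haB' : a ∈ B' := self_mem_mk' _ _
  have hB'dir : B'.direction = A.direction ⊔ W := direction_mk' _ _
  -- key direction computation for the intersection
  have hBB'dir : B.direction ⊓ (A.direction ⊔ W) = A.direction := by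
    apply le_antisymm
    · rintro v ⟨hvB, hvs⟩
      obtain ⟨u, hu, w, hw, rfl⟩ := Submodule.mem_sup.1 hvs
      have hwB : w ∈ B.direction := by
        have := sub_mem hvB (hdirAB hu)
        simpa using this
      have hw0 : w = 0 := hWinterB w hw hwB
      simpa [hw0] using hu
    · exact le_inf hdirAB le_sup_left
  have hinter : B ⊓ B' = A := by
    apply ext_of_direction_eq
    · rw [direction_inf_of_mem haB haB', hB'dir, hBB'dir]
    · exact ⟨a, ⟨haB, haB'⟩, haA⟩
  -- the two witnesses for PerpGo
  set Z₁ := AffineSubspace.mk' a (A.directionᗮ ⊓ B.direction) with hZ₁def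
  set Z₂ := AffineSubspace.mk' a W with hZ₂def
  have haZ₁ : a ∈ Z₁ := self_mem_mk' _ _
  have haZ₂ : a ∈ Z₂ := self_mem_mk' _ _
  have hZ₁dir : Z₁.direction = A.directionᗮ ⊓ B.direction := direction_mk' _ _
  have hZ₂dir : Z₂.direction = W := direction_mk' _ _
  have hjoin1 : A ⊔ Z₁ = B := by
    rw [hZ₁def, join_mk' haA, Submodule.sup_orthogonal_inf_of_hasOrthogonalProjection hdirAB,
      mk'_eq haB]
  have hjoin2 : A ⊔ Z₂ = B' := by
    rw [hZ₂def, hB'def, join_mk' haA]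
  have hjoinC : B ⊔ B' = C := by
    rw [hB'def, join_mk' haB, ← sup_assoc, sup_eq_left.mpr hdirAB, hsupW, mk'_eq haC]
  have hAneB' : A ≠ B' := by
    intro h
    apply hWneq
    have hWle : W ≤ A.direction := by
      rw [h, hB'dir]; exact le_sup_right
    rw [Submodule.eq_bot_iff]
    intro w hw
    exact hWinterB w hw (hdirAB (hWle hw))
  refine ⟨B', ⟨hinter, ⟨⟨a, by rw [hinter]; exact haA, Z₁, Z₂, haZ₁, haZ₂, ?_, ?_, ?_,
    by rw [hinter, hjoin1], by rw [hinter, hjoin2]⟩,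
    by rw [hinter]; exact hAB.ne, by rw [hinter]; exact hAneB'⟩, hjoinC⟩, ?_⟩
  · -- PerpX Z₁ (B ⊓ B')
    refine ⟨?_, ⟨a, haZ₁, by rw [hinter]; exact haA⟩⟩
    intro u hu v hv
    rw [hinter, hZ₁dir] at *
    rw [real_inner_comm]
    exact (hu.1 : u ∈ A.directionᗮ) v hv
  · -- PerpX Z₂ (B ⊓ B')
    refine ⟨?_, ⟨a, haZ₂, by rw [hinter]; exact haA⟩⟩
    intro u hu v hv
    rw [hZ₂dir] at hu
    rw [hinter] at hv
    exact hWperp u hu v (hdirAB hv)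
  · -- PerpX Z₁ Z₂
    refine ⟨?_, ⟨a, haZ₁, haZ₂⟩⟩
    intro u hu v hv
    rw [hZ₁dir] at hu
    rw [hZ₂dir] at hv
    rw [real_inner_comm]
    exact hWperp v hv u hu.2
  · -- uniqueness
    rintro B'' ⟨hi, ⟨⟨q, hq, Y₁, Y₂, hqY₁, hqY₂, hY₁X, hY₂X, hY₁Y₂, hj1, hj2⟩, -, -⟩, hj⟩
    rw [hi] at hq hY₁X hY₂X hj1 hj2
    have hqA : q ∈ A := hq
    have hqB : q ∈ B := hAB.le hqA
    have hqB'' : q ∈ B'' := by rw [← hj2]; exact (le_sup_right : Y₂ ≤ _) hqY₂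
    have hBdir : B.direction = A.direction ⊔ Y₁.direction := by
      rw [← hj1, direction_sup_of_mem_s8 hqA hqY₁]
    have hB''dir : B''.direction = A.direction ⊔ Y₂.direction := by
      rw [← hj2, direction_sup_of_mem_s8 hqA hqY₂]
    have hAleB : A.direction ≤ B.direction := by rw [hBdir]; exact le_sup_left
    have hCdir : C.direction = B.direction ⊔ Y₂.direction := by
      have h1 : C.direction = B.direction ⊔ B''.direction := by
        rw [← hj, direction_sup_of_mem_s8 hqB hqB'']
      rw [h1, hB''dir, ← sup_assoc, sup_eq_left.mpr hAleB]
    -- Y₂.direction ⊥ B.direction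
    have hY₂perpB : Y₂.direction ≤ B.directionᗮ := by
      intro z hz
      rw [Submodule.mem_orthogonal]
      intro b hb
      rw [hBdir] at hb
      obtain ⟨u, hu, v, hv, rfl⟩ := Submodule.mem_sup.1 hb
      have h1 : (inner ℝ u z : ℝ) = 0 := by
        rw [real_inner_comm]; exact hY₂X.1 z hz u hu
      have h2 : (inner ℝ v z : ℝ) = 0 := hY₁Y₂.1 v hv z hz
      rw [inner_add_left, h1, h2, add_zero]
    have hY₂dir : Y₂.direction = W := by
      apply le_antisymm
      · refine le_inf hY₂perpB ?_
        have h1 : Y₂ ≤ B'' := by rw [← hj2]; exact le_sup_right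
        have h2 : B'' ≤ C := by rw [← hj]; exact le_sup_right
        exact direction_le (h1.trans h2)
      · intro w hw
        have hwC : w ∈ C.direction := hw.2
        rw [hCdir] at hwC
        obtain ⟨b, hb, z, hz, rfl⟩ := Submodule.mem_sup.1 hwC
        have hb0 : b = 0 := by
          have hbperp : b ∈ B.directionᗮ := by
            have heq : b = (b + z) - z := (add_sub_cancel_right b z).symm
            rw [heq]
            exact sub_mem hw.1 (hY₂perpB hz)
          have := hbperp b hb
          rwa [inner_self_eq_zero] at this
        simpa [hb0] using hz
    have hdireq : B''.direction = B'.direction := by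
      rw [hB''dir, hB'dir, hY₂dir]
    have hAleB' : A ≤ B' := le_mk'_of haA le_sup_left
    have hqB' : q ∈ B' := hAleB' hqA
    exact ext_of_direction_eq hdireq ⟨q, hqB'', hqB'⟩
end

section
/- Let A, B, C be subspaces of E. If A ⊥g B and A ⊥g C, then A ⊥g (B ⊔ C) or A ⊆ B ⊔ C. -/
variable {E : Type*} [NormedAddCommGroup E] [InnerProductSpace ℝ E] [FiniteDimensional ℝ E]

omit [FiniteDimensional ℝ E] in
lemma mem_right_of_perp_sup' {P S : Submodule ℝ E}
    (hPS : ∀ s ∈ S, ∀ p ∈ P, (inner ℝ s p : ℝ) = 0) {u : E}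
    (hu : u ∈ P ⊔ S) (hup : ∀ p ∈ P, (inner ℝ u p : ℝ) = 0) : u ∈ S := by
  obtain ⟨p, hp, s, hs, rfl⟩ := Submodule.mem_sup.1 hu
  have h0 : (inner ℝ (p + s) p : ℝ) = 0 := hup p hp
  rw [inner_add_left, hPS s hs p hp, add_zero, real_inner_self_eq_norm_sq] at h0
  have : p = 0 := by simpa using sq_eq_zero_iff.1 h0
  simpa [this] using hs

omit [FiniteDimensional ℝ E] in
lemma perp_sup_of_perp' {P Q : Submodule ℝ E} {u : E}
    (h1 : ∀ p ∈ P, (inner ℝ u p : ℝ) = 0) (h2 : ∀ q ∈ Q, (inner ℝ u q : ℝ) = 0) :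
    ∀ v ∈ P ⊔ Q, (inner ℝ u v : ℝ) = 0 := by
  intro v hv
  obtain ⟨p, hp, q, hq, rfl⟩ := Submodule.mem_sup.1 hv
  rw [inner_add_right, h1 p hp, h2 q hq, add_zero]

theorem stmt9 (A B C : AffineSubspace ℝ E)
    (hA : (A : Set E).Nonempty) (hB : (B : Set E).Nonempty) (hC : (C : Set E).Nonempty)
    (h₁ : PerpG A B) (h₂ : PerpG A C) :
    PerpG A (B ⊔ C) ∨ A ≤ B ⊔ C := by
  by_cases hle : A ≤ B ⊔ C
  · exact Or.inr hle
  left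
  obtain ⟨⟨q₁, hq₁, Z₁, Z₂, hq₁Z₁, hq₁Z₂, ⟨hZ₁p, -⟩, ⟨hZ₂p, -⟩, ⟨hZ₁₂p, -⟩, hsup₁, hsup₂⟩,
    hne₁A, hne₁B⟩ := h₁
  obtain ⟨⟨q₂, hq₂, W₁, W₂, hq₂W₁, hq₂W₂, ⟨hW₁p, -⟩, ⟨hW₂p, -⟩, ⟨hW₁₂p, -⟩, hsup₁', hsup₂'⟩,
    hne₂A, hne₂C⟩ := h₂
  have hq₁A : q₁ ∈ A := ((AffineSubspace.mem_inf_iff _ _ _).1 hq₁).1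
  have hq₁B : q₁ ∈ B := ((AffineSubspace.mem_inf_iff _ _ _).1 hq₁).2
  have hq₂A : q₂ ∈ A := ((AffineSubspace.mem_inf_iff _ _ _).1 hq₂).1
  have hq₂C : q₂ ∈ C := ((AffineSubspace.mem_inf_iff _ _ _).1 hq₂).2
  have hBM : B ≤ B ⊔ C := le_sup_left
  have hCM : C ≤ B ⊔ C := le_sup_right
  have hq₁M : q₁ ∈ B ⊔ C := hBM hq₁B
  have hq₂M : q₂ ∈ B ⊔ C := hCM hq₂C
  have dAB : (A ⊓ B).direction = A.direction ⊓ B.direction :=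
    AffineSubspace.direction_inf_of_mem hq₁A hq₁B
  have dAC : (A ⊓ C).direction = A.direction ⊓ C.direction :=
    AffineSubspace.direction_inf_of_mem hq₂A hq₂C
  have dA₁ : A.direction = (A ⊓ B).direction ⊔ Z₁.direction := by
    conv_lhs => rw [← hsup₁]
    rw [AffineSubspace.direction_sup hq₁ hq₁Z₁]
    simp
  have dB : B.direction = (A ⊓ B).direction ⊔ Z₂.direction := by
    conv_lhs => rw [← hsup₂]
    rw [AffineSubspace.direction_sup hq₁ hq₁Z₂]
    simp
  have dA₂ : A.direction = (A ⊓ C).direction ⊔ W₁.direction := by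
    conv_lhs => rw [← hsup₁']
    rw [AffineSubspace.direction_sup hq₂ hq₂W₁]
    simp
  have dC : C.direction = (A ⊓ C).direction ⊔ W₂.direction := by
    conv_lhs => rw [← hsup₂']
    rw [AffineSubspace.direction_sup hq₂ hq₂W₂]
    simp
  have dM : (B ⊔ C).direction = B.direction ⊔ C.direction ⊔ ℝ ∙ (q₂ -ᵥ q₁) :=
    AffineSubspace.direction_sup hq₁B hq₂C
  have hq21A : q₂ -ᵥ q₁ ∈ A.direction := AffineSubspace.vsub_mem_direction hq₂A hq₁A
  have hq21M : q₂ -ᵥ q₁ ∈ (B ⊔ C).direction := AffineSubspace.vsub_mem_direction hq₂M hq₁M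
  -- the key claim
  have keyV : ∀ u ∈ A.direction,
      (∀ p ∈ A.direction ⊓ (B ⊔ C).direction, (inner ℝ u p : ℝ) = 0) →
      ∀ v ∈ (B ⊔ C).direction, (inner ℝ u v : ℝ) = 0 := by
    intro u hu hup
    have hupAB : ∀ p ∈ (A ⊓ B).direction, (inner ℝ u p : ℝ) = 0 := by
      intro p hp
      rw [dAB] at hp
      exact hup p ⟨hp.1, AffineSubspace.direction_le hBM hp.2⟩
    have hupAC : ∀ p ∈ (A ⊓ C).direction, (inner ℝ u p : ℝ) = 0 := by
      intro p hp
      rw [dAC] at hp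
      exact hup p ⟨hp.1, AffineSubspace.direction_le hCM hp.2⟩
    have huZ₁ : u ∈ Z₁.direction :=
      mem_right_of_perp_sup' hZ₁p (dA₁ ▸ hu) hupAB
    have huW₁ : u ∈ W₁.direction :=
      mem_right_of_perp_sup' hW₁p (dA₂ ▸ hu) hupAC
    have hB' : ∀ v ∈ B.direction, (inner ℝ u v : ℝ) = 0 := by
      rw [dB]
      exact perp_sup_of_perp' hupAB (fun s hs => hZ₁₂p u huZ₁ s hs)
    have hC' : ∀ v ∈ C.direction, (inner ℝ u v : ℝ) = 0 := by
      rw [dC]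
      exact perp_sup_of_perp' hupAC (fun s hs => hW₁₂p u huW₁ s hs)
    rw [dM]
    refine perp_sup_of_perp' (perp_sup_of_perp' hB' hC') ?_
    intro w hw
    obtain ⟨t, rfl⟩ := Submodule.mem_span_singleton.1 hw
    rw [real_inner_smul_right, hup _ ⟨hq21A, hq21M⟩, mul_zero]
  -- setup of the witnesses
  have hq₁N : q₁ ∈ A ⊓ (B ⊔ C) := (AffineSubspace.mem_inf_iff _ _ _).2 ⟨hq₁A, hq₁M⟩
  have dN : (A ⊓ (B ⊔ C)).direction = A.direction ⊓ (B ⊔ C).direction :=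
    AffineSubspace.direction_inf_of_mem hq₁A hq₁M
  set P := (A ⊓ (B ⊔ C)).direction with hP
  set S := Pᗮ ⊓ A.direction with hS
  set T := Pᗮ ⊓ (B ⊔ C).direction with hT
  have hPA : P ⊔ S = A.direction :=
    Submodule.sup_orthogonal_inf_of_hasOrthogonalProjection (by rw [dN]; exact inf_le_left)
  have hPM : P ⊔ T = (B ⊔ C).direction :=
    Submodule.sup_orthogonal_inf_of_hasOrthogonalProjection (by rw [dN]; exact inf_le_right)
  have hSperpP : ∀ u ∈ S, ∀ v ∈ P, (inner ℝ u v : ℝ) = 0 := by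
    intro u hu v hv
    rw [real_inner_comm]
    exact hu.1 v hv
  have hTperpP : ∀ u ∈ T, ∀ v ∈ P, (inner ℝ u v : ℝ) = 0 := by
    intro u hu v hv
    rw [real_inner_comm]
    exact hu.1 v hv
  refine ⟨⟨q₁, hq₁N, AffineSubspace.mk' q₁ S, AffineSubspace.mk' q₁ T,
    AffineSubspace.self_mem_mk' _ _, AffineSubspace.self_mem_mk' _ _, ?_, ?_, ?_, ?_, ?_⟩, ?_, ?_⟩
  · refine ⟨?_, ⟨q₁, AffineSubspace.self_mem_mk' _ _, hq₁N⟩⟩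
    intro u hu v hv
    rw [AffineSubspace.direction_mk'] at hu
    exact hSperpP u hu v hv
  · refine ⟨?_, ⟨q₁, AffineSubspace.self_mem_mk' _ _, hq₁N⟩⟩
    intro u hu v hv
    rw [AffineSubspace.direction_mk'] at hu
    exact hTperpP u hu v hv
  · refine ⟨?_, ⟨q₁, AffineSubspace.self_mem_mk' _ _, AffineSubspace.self_mem_mk' _ _⟩⟩
    intro u hu v hv
    rw [AffineSubspace.direction_mk'] at hu hv
    refine keyV u hu.2 ?_ v hv.2
    intro p hp
    rw [real_inner_comm]
    exact hu.1 p (by rw [dN]; exact hp)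
  · refine AffineSubspace.ext_of_direction_eq ?_
      ⟨q₁, (le_sup_left : A ⊓ (B ⊔ C) ≤ _) hq₁N, hq₁A⟩
    rw [AffineSubspace.direction_sup hq₁N (AffineSubspace.self_mem_mk' q₁ S),
      AffineSubspace.direction_mk']
    simpa using hPA
  · refine AffineSubspace.ext_of_direction_eq ?_
      ⟨q₁, (le_sup_left : A ⊓ (B ⊔ C) ≤ _) hq₁N, hq₁M⟩
    rw [AffineSubspace.direction_sup hq₁N (AffineSubspace.self_mem_mk' q₁ T),
      AffineSubspace.direction_mk']
    simpa using hPM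
  · intro h
    exact hle (inf_eq_left.1 h)
  · intro h
    have hMA : B ⊔ C ≤ A := inf_eq_right.1 h
    exact hne₁B (inf_eq_right.2 (le_trans hBM hMA))
end

section
/- Let A, B, C be subspaces of E. If A ⊥g B, A ⊥g C, and A ∩ B ∩ C ≠ ∅, then A ⊥g (B ∩ C) or B ∩ C ⊆ A. -/
variable {E : Type*} [NormedAddCommGroup E] [InnerProductSpace ℝ E] [FiniteDimensional ℝ E]

omit [FiniteDimensional ℝ E] in
lemma dir_sup_mem {s t : AffineSubspace ℝ E} {p : E} (hp : p ∈ s) (hq : p ∈ t) :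
    (s ⊔ t).direction = s.direction ⊔ t.direction := by
  rw [AffineSubspace.direction_sup hp hq, vsub_self]
  simp

omit [FiniteDimensional ℝ E] in
/-- From `PerpGo A B`, every vector in `B.direction` splits as a vector in
`A.direction ⊓ B.direction` plus a vector orthogonal to `A.direction`. -/
lemma perpGo_split {A B : AffineSubspace ℝ E} (h : PerpGo A B) :
    ∀ v ∈ B.direction, ∃ x ∈ A.direction ⊓ B.direction,
      ∀ a ∈ A.direction, (inner ℝ (v - x) a : ℝ) = 0 := by
  obtain ⟨q, hq, Z₁, Z₂, hqZ₁, hqZ₂, ⟨hP₁, _⟩, ⟨hP₂, _⟩, ⟨hP₁₂, _⟩, hS₁, hS₂⟩ := h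
  have hqA : q ∈ A := hq.1
  have hqB : q ∈ B := hq.2
  have hU : (A ⊓ B).direction = A.direction ⊓ B.direction :=
    AffineSubspace.direction_inf_of_mem hqA hqB
  have hdA : A.direction = (A ⊓ B).direction ⊔ Z₁.direction := by
    conv_lhs => rw [← hS₁]
    exact dir_sup_mem hq hqZ₁
  have hdB : B.direction = (A ⊓ B).direction ⊔ Z₂.direction := by
    conv_lhs => rw [← hS₂]
    exact dir_sup_mem hq hqZ₂
  intro v hv
  rw [hdB] at hv
  obtain ⟨x, hx, z, hz, rfl⟩ := Submodule.mem_sup.1 hv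
  refine ⟨x, hU ▸ hx, fun a ha => ?_⟩
  rw [hdA] at ha
  obtain ⟨a₁, ha₁, a₂, ha₂, rfl⟩ := Submodule.mem_sup.1 ha
  have h1 : (inner ℝ z a₁ : ℝ) = 0 := hP₂ z hz a₁ ha₁
  have h2 : (inner ℝ z a₂ : ℝ) = 0 := by
    rw [real_inner_comm]; exact hP₁₂ a₂ ha₂ z hz
  simp [inner_add_right, h1, h2]

omit [FiniteDimensional ℝ E] in
/-- Key lemma: if `A ⊥g∘ B` and `A ⊥g∘ C`, then any vector of `dirB ⊓ dirC`
orthogonal to `dirA ⊓ dirB ⊓ dirC` is orthogonal to all of `dirA`. -/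
lemma key {A B C : AffineSubspace ℝ E} (h₁ : PerpGo A B) (h₂ : PerpGo A C)
    {v : E} (hvB : v ∈ B.direction) (hvC : v ∈ C.direction)
    (hvW : ∀ w ∈ A.direction ⊓ (B.direction ⊓ C.direction), (inner ℝ v w : ℝ) = 0) :
    ∀ a ∈ A.direction, (inner ℝ v a : ℝ) = 0 := by
  obtain ⟨x, hx, hxo⟩ := perpGo_split h₁ v hvB
  obtain ⟨y, hy, hyo⟩ := perpGo_split h₂ v hvC
  have hxy : x = y := by
    have hxA : x ∈ A.direction := hx.1
    have hyA : y ∈ A.direction := hy.1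
    have : (inner ℝ (x - y) (x - y) : ℝ) = 0 := by
      have e : (inner ℝ (x - y) (x - y) : ℝ)
          = (inner ℝ (v - y) (x - y) : ℝ) - (inner ℝ (v - x) (x - y) : ℝ) := by
        rw [← inner_sub_left]
        congr 1
        abel
      rw [e, hxo _ (Submodule.sub_mem _ hxA hyA), hyo _ (Submodule.sub_mem _ hxA hyA)]
      ring
    exact sub_eq_zero.1 (inner_self_eq_zero.1 this)
  subst hxy
  have hxW : x ∈ A.direction ⊓ (B.direction ⊓ C.direction) :=
    ⟨hx.1, hx.2, hy.2⟩
  have hx0 : x = 0 := by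
    have h1 : (inner ℝ v x : ℝ) = 0 := hvW x hxW
    have h2 : (inner ℝ (v - x) x : ℝ) = 0 := hxo x hx.1
    rw [inner_sub_left, h1] at h2
    have : (inner ℝ x x : ℝ) = 0 := by linarith
    exact inner_self_eq_zero.1 this
  intro a ha
  have := hxo a ha
  rw [hx0, sub_zero] at this
  exact this

set_option maxHeartbeats 1000000 in
theorem stmt12 (A B C : AffineSubspace ℝ E)
    (hA : (A : Set E).Nonempty) (hB : (B : Set E).Nonempty) (hC : (C : Set E).Nonempty)
    (h₁ : PerpG A B) (h₂ : PerpG A C)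
    (h₃ : ((A : Set E) ∩ (B : Set E) ∩ (C : Set E)).Nonempty) :
    PerpG A (B ⊓ C) ∨ B ⊓ C ≤ A := by
  obtain ⟨p, ⟨⟨hpA, hpB⟩, hpC⟩⟩ := h₃
  by_cases hle : B ⊓ C ≤ A
  · exact Or.inr hle
  left
  have hpBC : p ∈ B ⊓ C := ⟨hpB, hpC⟩
  have hpI : p ∈ A ⊓ (B ⊓ C) := ⟨hpA, hpBC⟩
  have hW : (A ⊓ (B ⊓ C)).direction = A.direction ⊓ (B.direction ⊓ C.direction) := by
    rw [AffineSubspace.direction_inf_of_mem hpA hpBC,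
      AffineSubspace.direction_inf_of_mem hpB hpC]
  have hWA : (A ⊓ (B ⊓ C)).direction ≤ A.direction := by rw [hW]; exact inf_le_left
  have hWBC : (A ⊓ (B ⊓ C)).direction ≤ (B ⊓ C).direction := by
    rw [hW, AffineSubspace.direction_inf_of_mem hpB hpC]; exact inf_le_right
  have hpZ₁ : p ∈ AffineSubspace.mk' p ((A ⊓ (B ⊓ C)).directionᗮ ⊓ A.direction) :=
    AffineSubspace.self_mem_mk' _ _
  have hpZ₂ : p ∈ AffineSubspace.mk' p ((A ⊓ (B ⊓ C)).directionᗮ ⊓ (B ⊓ C).direction) :=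
    AffineSubspace.self_mem_mk' _ _
  have hdZ₁ : (AffineSubspace.mk' p ((A ⊓ (B ⊓ C)).directionᗮ ⊓ A.direction)).direction
      = (A ⊓ (B ⊓ C)).directionᗮ ⊓ A.direction := AffineSubspace.direction_mk' _ _
  have hdZ₂ : (AffineSubspace.mk' p ((A ⊓ (B ⊓ C)).directionᗮ ⊓ (B ⊓ C).direction)).direction
      = (A ⊓ (B ⊓ C)).directionᗮ ⊓ (B ⊓ C).direction := AffineSubspace.direction_mk' _ _
  have hPerp₁ : Perp (AffineSubspace.mk' p ((A ⊓ (B ⊓ C)).directionᗮ ⊓ A.direction))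
      (A ⊓ (B ⊓ C)) := by
    intro u hu v hv
    rw [hdZ₁] at hu
    rw [real_inner_comm]
    exact hu.1 v hv
  have hPerp₂ : Perp (AffineSubspace.mk' p ((A ⊓ (B ⊓ C)).directionᗮ ⊓ (B ⊓ C).direction))
      (A ⊓ (B ⊓ C)) := by
    intro u hu v hv
    rw [hdZ₂] at hu
    rw [real_inner_comm]
    exact hu.1 v hv
  have hPerp₁₂ : Perp (AffineSubspace.mk' p ((A ⊓ (B ⊓ C)).directionᗮ ⊓ A.direction))
      (AffineSubspace.mk' p ((A ⊓ (B ⊓ C)).directionᗮ ⊓ (B ⊓ C).direction)) := by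
    intro u hu v hv
    rw [hdZ₁] at hu
    rw [hdZ₂] at hv
    have hvBC : v ∈ (B ⊓ C).direction := hv.2
    rw [AffineSubspace.direction_inf_of_mem hpB hpC] at hvBC
    have hvW : ∀ w ∈ A.direction ⊓ (B.direction ⊓ C.direction), (inner ℝ v w : ℝ) = 0 := by
      intro w hw
      have hwW : w ∈ (A ⊓ (B ⊓ C)).direction := by rw [hW]; exact hw
      rw [real_inner_comm]
      exact hv.1 w hwW
    rw [real_inner_comm]
    exact key h₁.1 h₂.1 hvBC.1 hvBC.2 hvW u hu.2
  have hsup₁ : (A ⊓ (B ⊓ C)) ⊔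
      AffineSubspace.mk' p ((A ⊓ (B ⊓ C)).directionᗮ ⊓ A.direction) = A := by
    apply AffineSubspace.ext_of_direction_eq
    · rw [dir_sup_mem hpI hpZ₁, hdZ₁]
      exact Submodule.sup_orthogonal_inf_of_hasOrthogonalProjection hWA
    · exact ⟨p, (le_sup_left :
        A ⊓ (B ⊓ C) ≤ _ ⊔ AffineSubspace.mk' p ((A ⊓ (B ⊓ C)).directionᗮ ⊓ A.direction)) hpI,
        hpA⟩
  have hsup₂ : (A ⊓ (B ⊓ C)) ⊔
      AffineSubspace.mk' p ((A ⊓ (B ⊓ C)).directionᗮ ⊓ (B ⊓ C).direction) = B ⊓ C := by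
    apply AffineSubspace.ext_of_direction_eq
    · rw [dir_sup_mem hpI hpZ₂, hdZ₂]
      exact Submodule.sup_orthogonal_inf_of_hasOrthogonalProjection hWBC
    · exact ⟨p, (le_sup_left : A ⊓ (B ⊓ C) ≤ _ ⊔
        AffineSubspace.mk' p ((A ⊓ (B ⊓ C)).directionᗮ ⊓ (B ⊓ C).direction)) hpI, hpBC⟩
  refine ⟨⟨p, hpI, _, _, hpZ₁, hpZ₂, ⟨hPerp₁, ⟨p, hpZ₁, hpI⟩⟩, ⟨hPerp₂, ⟨p, hpZ₂, hpI⟩⟩,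
    ⟨hPerp₁₂, ⟨p, hpZ₁, hpZ₂⟩⟩, hsup₁, hsup₂⟩, ?_, ?_⟩
  · intro hEq
    have hAB : A ≤ B := by
      intro x hx
      have hx' : x ∈ A ⊓ (B ⊓ C) := by rw [hEq]; exact hx
      exact hx'.2.1
    exact h₁.2.1 (by rw [inf_eq_left.2 hAB])
  · intro hEq
    exact hle fun x hx => (show x ∈ A ⊓ (B ⊓ C) by rw [hEq]; exact hx).1
end

section
/- Let A, B, C be subspaces of E. If A ⊥g∘ B, B is parallel to C, and A ∩ C ≠ ∅, then A ⊥g∘ C. -/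
variable {E : Type*} [NormedAddCommGroup E] [InnerProductSpace ℝ E] [FiniteDimensional ℝ E]

open Pointwise

theorem stmt15 (A B C : AffineSubspace ℝ E)
    (hA : (A : Set E).Nonempty) (hB : (B : Set E).Nonempty) (hC : (C : Set E).Nonempty)
    (h₁ : PerpGo A B) (h₂ : AffineSubspace.Parallel B C)
    (h₃ : ((A : Set E) ∩ (C : Set E)).Nonempty) :
    PerpGo A C := by
  obtain ⟨q, hq, Z₁, Z₂, hqZ₁, hqZ₂, hP1, hP2, hP12, hsup1, hsup2⟩ := h₁
  obtain ⟨p, hpA, hpC⟩ := h₃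
  obtain ⟨hqA, hqB⟩ : q ∈ A ∧ q ∈ B := hq
  set t : E := p -ᵥ q with ht
  have hvaddq : t +ᵥ q = p := by simp [ht]
  -- translation by t fixes A
  have hAeq : t +ᵥ A = A := by
    apply AffineSubspace.ext_of_direction_eq
    · exact AffineSubspace.pointwise_vadd_direction t A
    · refine ⟨p, ?_, hpA⟩
      rw [← hvaddq]
      exact AffineSubspace.vadd_mem_pointwise_vadd_iff.2 hqA
  -- translation by t carries B to C
  have hBeq : t +ᵥ B = C := by
    apply AffineSubspace.ext_of_direction_eq
    · rw [AffineSubspace.pointwise_vadd_direction]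
      exact h₂.direction_eq
    · refine ⟨p, ?_, hpC⟩
      rw [← hvaddq]
      exact AffineSubspace.vadd_mem_pointwise_vadd_iff.2 hqB
  -- translation distributes over ⊓ and ⊔
  have hinf : ∀ S T : AffineSubspace ℝ E, t +ᵥ (S ⊓ T) = (t +ᵥ S) ⊓ (t +ᵥ T) := by
    intro S T
    apply SetLike.coe_injective
    simp only [AffineSubspace.coe_pointwise_vadd, AffineSubspace.coe_inf]
    exact Set.vadd_set_inter
  have hsupv : ∀ S T : AffineSubspace ℝ E, t +ᵥ (S ⊔ T) = (t +ᵥ S) ⊔ (t +ᵥ T) := by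
    intro S T
    simp only [AffineSubspace.pointwise_vadd_eq_map, AffineSubspace.map_sup]
  have hACeq : t +ᵥ (A ⊓ B) = A ⊓ C := by rw [hinf, hAeq, hBeq]
  -- Perp is preserved by translations
  have hPerpv : ∀ S T : AffineSubspace ℝ E, Perp S T → Perp (t +ᵥ S) (t +ᵥ T) := by
    intro S T h
    simpa [Perp, AffineSubspace.pointwise_vadd_direction] using h
  -- nonempty intersections are preserved
  have hNev : ∀ S T : AffineSubspace ℝ E, ((S : Set E) ∩ (T : Set E)).Nonempty →
      (((t +ᵥ S : AffineSubspace ℝ E) : Set E) ∩ ((t +ᵥ T : AffineSubspace ℝ E) : Set E)).Nonempty := by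
    intro S T ⟨x, hxS, hxT⟩
    exact ⟨t +ᵥ x, Set.vadd_mem_vadd_set hxS, Set.vadd_mem_vadd_set hxT⟩
  have hPXv : ∀ S T : AffineSubspace ℝ E, PerpX S T → PerpX (t +ᵥ S) (t +ᵥ T) := by
    intro S T ⟨h1, h2⟩
    exact ⟨hPerpv S T h1, hNev S T h2⟩
  refine ⟨p, ⟨hpA, hpC⟩, t +ᵥ Z₁, t +ᵥ Z₂, ?_, ?_, ?_, ?_, ?_, ?_, ?_⟩
  · rw [← hvaddq]; exact AffineSubspace.vadd_mem_pointwise_vadd_iff.2 hqZ₁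
  · rw [← hvaddq]; exact AffineSubspace.vadd_mem_pointwise_vadd_iff.2 hqZ₂
  · rw [← hACeq]; exact hPXv _ _ hP1
  · rw [← hACeq]; exact hPXv _ _ hP2
  · exact hPXv _ _ hP12
  · rw [← hACeq, ← hsupv, hsup1, hAeq]
  · rw [← hACeq, ← hsupv, hsup2, hBeq]
end

section
/- Let A, B, C be subspaces of E. If A ⊥g∘ B and A ⊥g∘ C, then A ⊥g∘ (B ⊔ C). -/
/-- helper: if `A = (A⊓X) ⊔ Z`, `X = (A⊓X) ⊔ Z'` with the orthogonality conditions,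
and `u ∈ A.direction` is orthogonal to `(A⊓X).direction`, then `u ⊥ X.direction`. -/
theorem key_helper {E : Type*} [NormedAddCommGroup E] [InnerProductSpace ℝ E]
    {A X Z Z' : AffineSubspace ℝ E} {q : E}
    (hq : q ∈ A ⊓ X) (hqZ : q ∈ Z) (hqZ' : q ∈ Z')
    (h1 : Perp Z (A ⊓ X)) (h3 : Perp Z Z')
    (e1 : (A ⊓ X) ⊔ Z = A) (e2 : (A ⊓ X) ⊔ Z' = X)
    {u : E} (hu : u ∈ A.direction)
    (hperp : ∀ m ∈ (A ⊓ X).direction, (inner ℝ u m : ℝ) = 0) :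
    ∀ v ∈ X.direction, (inner ℝ u v : ℝ) = 0 := by
  have hdirA : A.direction = (A ⊓ X).direction ⊔ Z.direction := by
    have := AffineSubspace.direction_sup hq hqZ
    rw [e1] at this
    simpa using this
  have hdirX : X.direction = (A ⊓ X).direction ⊔ Z'.direction := by
    have := AffineSubspace.direction_sup hq hqZ'
    rw [e2] at this
    simpa using this
  rw [hdirA, Submodule.mem_sup] at hu
  obtain ⟨a, ha, z, hz, rfl⟩ := hu
  have ha0 : a = 0 := by
    have h1' : (inner ℝ z a : ℝ) = 0 := h1 z hz a ha
    have h2' : (inner ℝ (a + z) a : ℝ) = 0 := hperp a ha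
    rw [inner_add_left, h1', add_zero] at h2'
    exact inner_self_eq_zero.mp h2'
  subst ha0
  intro v hv
  rw [hdirX, Submodule.mem_sup] at hv
  obtain ⟨m, hm, w, hw, rfl⟩ := hv
  rw [zero_add, inner_add_right, h1 z hz m hm, h3 z hz w hw, add_zero]

variable {E : Type*} [NormedAddCommGroup E] [InnerProductSpace ℝ E] [FiniteDimensional ℝ E]

theorem stmt16 (A B C : AffineSubspace ℝ E)
    (hA : (A : Set E).Nonempty) (hB : (B : Set E).Nonempty) (hC : (C : Set E).Nonempty)
    (h₁ : PerpGo A B) (h₂ : PerpGo A C) :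
    PerpGo A (B ⊔ C) := by
  obtain ⟨q, hqAB, Z₁, Z₂, hqZ₁, hqZ₂, hZ₁M, hZ₂M, hZ₁Z₂, e₁, e₂⟩ := h₁
  obtain ⟨q', hqAC, W₁, W₂, hqW₁, hqW₂, hW₁M, hW₂M, hW₁W₂, f₁, f₂⟩ := h₂
  set M := A ⊓ (B ⊔ C) with hM
  have hqA : q ∈ A := ((AffineSubspace.mem_inf_iff q A B).mp hqAB).1
  have hqB : q ∈ B := ((AffineSubspace.mem_inf_iff q A B).mp hqAB).2
  have hq'A : q' ∈ A := ((AffineSubspace.mem_inf_iff q' A C).mp hqAC).1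
  have hq'C : q' ∈ C := ((AffineSubspace.mem_inf_iff q' A C).mp hqAC).2
  have hqBC : q ∈ B ⊔ C := (le_sup_left : B ≤ B ⊔ C) hqB
  have hq'BC : q' ∈ B ⊔ C := (le_sup_right : C ≤ B ⊔ C) hq'C
  have hqM : q ∈ M := (AffineSubspace.mem_inf_iff q A (B ⊔ C)).mpr ⟨hqA, hqBC⟩
  have hq'M : q' ∈ M := (AffineSubspace.mem_inf_iff q' A (B ⊔ C)).mpr ⟨hq'A, hq'BC⟩
  have hMA : M.direction ≤ A.direction := AffineSubspace.direction_le inf_le_left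
  have hMBC : M.direction ≤ (B ⊔ C).direction := AffineSubspace.direction_le inf_le_right
  have hABM : (A ⊓ B).direction ≤ M.direction :=
    AffineSubspace.direction_le (inf_le_inf_left A le_sup_left)
  have hACM : (A ⊓ C).direction ≤ M.direction :=
    AffineSubspace.direction_le (inf_le_inf_left A le_sup_right)
  -- the key orthogonality fact
  have key : ∀ u ∈ M.directionᗮ ⊓ A.direction, ∀ v ∈ (B ⊔ C).direction,
      (inner ℝ u v : ℝ) = 0 := by
    rintro u ⟨huM, huA⟩ v hv
    have huB : ∀ v ∈ B.direction, (inner ℝ u v : ℝ) = 0 :=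
      key_helper hqAB hqZ₁ hqZ₂ hZ₁M.1 hZ₁Z₂.1 e₁ e₂ huA
        (fun m hm => by rw [real_inner_comm]; exact huM m (hABM hm))
    have huC : ∀ v ∈ C.direction, (inner ℝ u v : ℝ) = 0 :=
      key_helper hqAC hqW₁ hqW₂ hW₁M.1 hW₁W₂.1 f₁ f₂ huA
        (fun m hm => by rw [real_inner_comm]; exact huM m (hACM hm))
    rw [AffineSubspace.direction_sup hqB hq'C, Submodule.mem_sup] at hv
    obtain ⟨y, hy, z, hz, rfl⟩ := hv
    rw [Submodule.mem_sup] at hy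
    obtain ⟨b, hb, c, hc, rfl⟩ := hy
    rw [Submodule.mem_span_singleton] at hz
    obtain ⟨t, rfl⟩ := hz
    have hqq : (inner ℝ u (q' -ᵥ q) : ℝ) = 0 := by
      rw [real_inner_comm]
      exact huM _ (AffineSubspace.vsub_mem_direction hq'M hqM)
    rw [inner_add_right, inner_add_right, huB b hb, huC c hc,
      real_inner_smul_right, hqq]
    ring
  refine ⟨q, hqM, AffineSubspace.mk' q (M.directionᗮ ⊓ A.direction),
    AffineSubspace.mk' q (M.directionᗮ ⊓ (B ⊔ C).direction),
    AffineSubspace.self_mem_mk' _ _, AffineSubspace.self_mem_mk' _ _, ?_, ?_, ?_, ?_, ?_⟩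
  · refine ⟨?_, ⟨q, AffineSubspace.self_mem_mk' _ _, hqM⟩⟩
    intro u hu v hv
    rw [AffineSubspace.direction_mk'] at hu
    rw [real_inner_comm]
    exact hu.1 v hv
  · refine ⟨?_, ⟨q, AffineSubspace.self_mem_mk' _ _, hqM⟩⟩
    intro u hu v hv
    rw [AffineSubspace.direction_mk'] at hu
    rw [real_inner_comm]
    exact hu.1 v hv
  · refine ⟨?_, ⟨q, AffineSubspace.self_mem_mk' _ _, AffineSubspace.self_mem_mk' _ _⟩⟩
    intro u hu v hv
    rw [AffineSubspace.direction_mk'] at hu hv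
    exact key u hu v hv.2
  · refine AffineSubspace.ext_of_direction_eq ?_
      ⟨q, (le_sup_left : M ≤ M ⊔ AffineSubspace.mk' q (M.directionᗮ ⊓ A.direction)) hqM, hqA⟩
    rw [AffineSubspace.direction_sup hqM (AffineSubspace.self_mem_mk' _ _),
      AffineSubspace.direction_mk']
    simp only [vsub_self, Submodule.span_zero_singleton, sup_bot_eq]
    exact Submodule.sup_orthogonal_inf_of_hasOrthogonalProjection hMA
  · refine AffineSubspace.ext_of_direction_eq ?_
      ⟨q, (le_sup_left :
        M ≤ M ⊔ AffineSubspace.mk' q (M.directionᗮ ⊓ (B ⊔ C).direction)) hqM, hqBC⟩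
    rw [AffineSubspace.direction_sup hqM (AffineSubspace.self_mem_mk' _ _),
      AffineSubspace.direction_mk']
    simp only [vsub_self, Submodule.span_zero_singleton, sup_bot_eq]
    exact Submodule.sup_orthogonal_inf_of_hasOrthogonalProjection hMBC
end

section
/- Let A, B, C be subspaces of E. If A ⊥g∘ B and A ∩ B ⊆ C ⊆ B, then A ⊥g∘ C. -/
variable {E : Type*} [NormedAddCommGroup E] [InnerProductSpace ℝ E] [FiniteDimensional ℝ E]

theorem stmt17 (A B C : AffineSubspace ℝ E)
    (hA : (A : Set E).Nonempty) (hB : (B : Set E).Nonempty) (hC : (C : Set E).Nonempty)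
    (h₁ : PerpGo A B) (h₂ : A ⊓ B ≤ C) (h₃ : C ≤ B) :
    PerpGo A C := by
  obtain ⟨q, hq, Z₁, Z₂, hqZ₁, hqZ₂, hP1, hP2, hP12, hJ1, hJ2⟩ := h₁
  have hAC : A ⊓ C = A ⊓ B := le_antisymm (inf_le_inf_left A h₃) (le_inf inf_le_left h₂)
  have hqC : q ∈ C := h₂ hq
  have hqA : q ∈ A := hq.1
  have hdir : (C ⊓ Z₂).direction ≤ Z₂.direction := fun v hv =>
    (AffineSubspace.direction_inf C Z₂ hv).2
  refine ⟨q, ⟨hqA, hqC⟩, Z₁, C ⊓ Z₂, hqZ₁, ⟨hqC, hqZ₂⟩, ?_, ?_, ?_, ?_, ?_⟩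
  · rw [hAC]; exact hP1
  · rw [hAC]
    exact ⟨fun u hu v hv => hP2.1 u (hdir hu) v hv, ⟨q, ⟨hqC, hqZ₂⟩, hq⟩⟩
  · exact ⟨fun u hu v hv => hP12.1 u hu v (hdir hv), ⟨q, hqZ₁, hqC, hqZ₂⟩⟩
  · rw [hAC]; exact hJ1
  · rw [hAC]
    refine le_antisymm (sup_le h₂ inf_le_left) (fun c hc => ?_)
    have hcB : c ∈ (A ⊓ B) ⊔ Z₂ := by rw [hJ2]; exact h₃ hc
    have hqS : q ∈ (A ⊓ B) ⊔ Z₂ := (le_sup_left : (A ⊓ B) ≤ _) hq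
    have hv : c -ᵥ q ∈ ((A ⊓ B) ⊔ Z₂).direction :=
      AffineSubspace.vsub_mem_direction hcB hqS
    rw [AffineSubspace.direction_sup hq hqZ₂, vsub_self, Submodule.span_zero_singleton,
      sup_bot_eq] at hv
    obtain ⟨u, hu, v, hvmem, huv⟩ := Submodule.mem_sup.1 hv
    set J := (A ⊓ B) ⊔ (C ⊓ Z₂) with hJ
    have huq : u +ᵥ q ∈ A ⊓ B := AffineSubspace.vadd_mem_of_mem_direction hu hq
    have hvC : v ∈ C.direction := by
      have h1 : c -ᵥ q ∈ C.direction := AffineSubspace.vsub_mem_direction hc hqC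
      have h2 : u ∈ C.direction := AffineSubspace.direction_le h₂ hu
      have : v = (c -ᵥ q) - u := by rw [← huv]; abel
      rw [this]; exact sub_mem h1 h2
    have hvq : v +ᵥ q ∈ C ⊓ Z₂ :=
      ⟨AffineSubspace.vadd_mem_of_mem_direction hvC hqC,
        AffineSubspace.vadd_mem_of_mem_direction hvmem hqZ₂⟩
    have hqJ : q ∈ J := (le_sup_left : (A ⊓ B) ≤ J) hq
    have huJ : u ∈ J.direction := AffineSubspace.direction_le le_sup_left hu
    have hvJ : v ∈ J.direction := by
      have := AffineSubspace.vsub_mem_direction ((le_sup_right : (C ⊓ Z₂) ≤ J) hvq) hqJ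
      simpa using this
    have : c = (u + v) +ᵥ q := by rw [huv, vsub_vadd]
    rw [this]
    exact AffineSubspace.vadd_mem_of_mem_direction (add_mem huJ hvJ) hqJ
end

section
/- Let A, B, C be subspaces of E. If A ⊥g∘ B, A ⊥g∘ C, and A ∩ B ∩ C ≠ ∅, then A ⊥g∘ (B ∩ C). -/
variable {E : Type*} [NormedAddCommGroup E] [InnerProductSpace ℝ E] [FiniteDimensional ℝ E]

/-- From `PerpGo A B`, every direction vector of `B` splits as a vector in
the direction of `A ⊓ B` plus a vector orthogonal to the direction of `A`. -/
lemma perpGo_decomp (A B : AffineSubspace ℝ E) (h : PerpGo A B) :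
    ∀ v ∈ B.direction, ∃ m ∈ (A ⊓ B).direction, ∃ w : E,
      v = m + w ∧ ∀ u ∈ A.direction, (inner ℝ u w : ℝ) = 0 := by
  obtain ⟨q, hq, Z, W, hqZ, hqW, hZ, hW, hZW, hsZ, hsW⟩ := h
  intro v hv
  have hdB : B.direction = (A ⊓ B).direction ⊔ W.direction := by
    have h := AffineSubspace.direction_sup hq hqW
    rw [hsW] at h
    simpa using h
  rw [hdB] at hv
  obtain ⟨m, hm, w, hw, rfl⟩ := Submodule.mem_sup.1 hv
  refine ⟨m, hm, w, rfl, ?_⟩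
  intro u hu
  have hdA : A.direction = (A ⊓ B).direction ⊔ Z.direction := by
    have h := AffineSubspace.direction_sup hq hqZ
    rw [hsZ] at h
    simpa using h
  rw [hdA] at hu
  obtain ⟨d, hd, z, hz, rfl⟩ := Submodule.mem_sup.1 hu
  have h1 : (inner ℝ d w : ℝ) = 0 := by
    have := hW.1 w hw d hd
    rwa [real_inner_comm] at this
  have h2 : (inner ℝ z w : ℝ) = 0 := hZW.1 z hz w hw
  rw [inner_add_left, h1, h2, add_zero]

/-- Joining `X` with the orthogonal complement (through a common point) of its
direction inside a larger subspace `Y` recovers `Y`. -/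
lemma sup_perp_comp (X Y : AffineSubspace ℝ E) {p : E} (hpX : p ∈ X) (hpY : p ∈ Y)
    (hle : X.direction ≤ Y.direction) :
    X ⊔ AffineSubspace.mk' p (X.directionᗮ ⊓ Y.direction) = Y := by
  have hd : (X ⊔ AffineSubspace.mk' p (X.directionᗮ ⊓ Y.direction)).direction = Y.direction := by
    rw [AffineSubspace.direction_sup hpX (AffineSubspace.self_mem_mk' _ _),
      AffineSubspace.direction_mk', vsub_self, Submodule.span_zero_singleton, sup_bot_eq]
    exact Submodule.sup_orthogonal_inf_of_hasOrthogonalProjection hle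
  exact AffineSubspace.ext_of_direction_eq hd
    ⟨p, (le_sup_left : X ≤ _) hpX, hpY⟩

theorem stmt19 (A B C : AffineSubspace ℝ E)
    (hA : (A : Set E).Nonempty) (hB : (B : Set E).Nonempty) (hC : (C : Set E).Nonempty)
    (h₁ : PerpGo A B) (h₂ : PerpGo A C)
    (h₃ : ((A : Set E) ∩ (B : Set E) ∩ (C : Set E)).Nonempty) :
    PerpGo A (B ⊓ C) := by
  obtain ⟨p, hp⟩ := h₃
  have hpA : p ∈ A := hp.1.1
  have hpB : p ∈ B := hp.1.2
  have hpC : p ∈ C := hp.2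
  have hpBC : p ∈ B ⊓ C := ⟨hpB, hpC⟩
  have hpM : p ∈ A ⊓ (B ⊓ C) := ⟨hpA, hpBC⟩
  set D : Submodule ℝ E := (A ⊓ (B ⊓ C)).direction with hD
  have hDA : D ≤ A.direction := AffineSubspace.direction_le inf_le_left
  have hDBC : D ≤ (B ⊓ C).direction := AffineSubspace.direction_le inf_le_right
  have hdBC : (B ⊓ C).direction = B.direction ⊓ C.direction :=
    AffineSubspace.direction_inf_of_mem hpB hpC
  have horth : ∀ u ∈ (Dᗮ : Submodule ℝ E), ∀ v ∈ D, (inner ℝ u v : ℝ) = 0 := by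
    intro u hu v hv
    rw [real_inner_comm]
    exact (Submodule.mem_orthogonal D u).1 hu v hv
  refine ⟨p, hpM, AffineSubspace.mk' p (Dᗮ ⊓ A.direction),
    AffineSubspace.mk' p (Dᗮ ⊓ (B ⊓ C).direction),
    AffineSubspace.self_mem_mk' _ _, AffineSubspace.self_mem_mk' _ _, ?_, ?_, ?_, ?_, ?_⟩
  · refine ⟨?_, ⟨p, AffineSubspace.self_mem_mk' _ _, hpM⟩⟩
    intro u hu v hv
    rw [AffineSubspace.direction_mk'] at hu
    exact horth u hu.1 v hv
  · refine ⟨?_, ⟨p, AffineSubspace.self_mem_mk' _ _, hpM⟩⟩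
    intro u hu v hv
    rw [AffineSubspace.direction_mk'] at hu
    exact horth u hu.1 v hv
  · refine ⟨?_, ⟨p, AffineSubspace.self_mem_mk' _ _, AffineSubspace.self_mem_mk' _ _⟩⟩
    intro u hu v hv
    rw [AffineSubspace.direction_mk'] at hu hv
    obtain ⟨huD, huA⟩ := hu
    obtain ⟨hvD, hvBC⟩ := hv
    rw [hdBC] at hvBC
    obtain ⟨m, hm, w, hvw, hwA⟩ := perpGo_decomp A B h₁ v hvBC.1
    obtain ⟨n, hn, y, hvy, hyA⟩ := perpGo_decomp A C h₂ v hvBC.2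
    obtain ⟨q1, hq1, -⟩ := h₁
    obtain ⟨q2, hq2, -⟩ := h₂
    have hmAB : m ∈ A.direction ⊓ B.direction := by
      rwa [← AffineSubspace.direction_inf_of_mem hq1.1 hq1.2]
    have hnAC : n ∈ A.direction ⊓ C.direction := by
      rwa [← AffineSubspace.direction_inf_of_mem hq2.1 hq2.2]
    have hmn : m = n := by
      have hsub : m - n = y - w := by
        have h := hvw.symm.trans hvy
        linear_combination (norm := module) h
      have hmem : m - n ∈ A.direction := Submodule.sub_mem _ hmAB.1 hnAC.1
      have hzero : (inner ℝ (m - n) (m - n) : ℝ) = 0 := by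
        nth_rewrite 2 [hsub]
        rw [inner_sub_right, hyA _ hmem, hwA _ hmem, sub_zero]
      exact sub_eq_zero.1 (inner_self_eq_zero.1 hzero)
    have hmD : m ∈ D := by
      have hDeq : D = A.direction ⊓ (B.direction ⊓ C.direction) := by
        rw [hD, AffineSubspace.direction_inf_of_mem hpA hpBC, hdBC]
      rw [hDeq]
      exact ⟨hmAB.1, hmAB.2, by rw [hmn]; exact hnAC.2⟩
    rw [hvw, inner_add_right, horth u huD m hmD, hwA u huA, add_zero]
  · exact sup_perp_comp _ _ hpM hpA hDA
  · exact sup_perp_comp _ _ hpM hpBC hDBC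
end
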